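/- arXiv:0909.5007 — 10 statements merged into one kernel-verified Lean document; each statement's English description precedes it below -/
import Mathlib

section
/- Let s_1, …, s_M be binary sequences of common period P that are consecutively 3-wise shift-invariant, with duty factors f_1, …, f_M; set s_j := 0 and f_j := 0 for every index j outside {1,…,M}. Then for every i ∈ {1,…,M} and all shifts τ_{i−2}, τ_{i−1}, τ_i, τ_{i+1}, τ_{i+2} ∈ ZMod P, the forward throughput satisfies Σ_{k ∈ ZMod P} s_i(k−τ_i)·(1−s_{i+1}(k−τ_{i+1}))·(1−s_{i+2}(k−τ_{i+2})) = P·f_i·(1−f_{i+1})·(1−f_{i+2}), and the backward throughput satisfies Σ_{k ∈ ZMod P} s_i(k−τ_i)·(1−s_{i−1}(k−τ_{i−1}))·(1−s_{i−2}(k−τ_{i−2})) = P·f_i·(1−f_{i−1})·(1−f_{i−2}). -/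
private lemma sum_shift_aux {P : ℕ} [NeZero P] (g : ZMod P → ℝ) (τ : ZMod P) :
    ∑ k : ZMod P, g (k - τ) = ∑ k : ZMod P, g k :=
  Fintype.sum_equiv (Equiv.subRight τ) _ _ fun _ => rfl

private lemma sum_shift_left {P : ℕ} [NeZero P] (g : ZMod P → ℝ) (k : ZMod P) :
    ∑ t : ZMod P, g (k - t) = ∑ t : ZMod P, g t :=
  Fintype.sum_equiv (Equiv.subLeft k) _ _ fun _ => rfl

private lemma key1 {P : ℕ} [NeZero P] (g : ZMod P → ℝ) (c : ℝ)
    (h : c = (1 / (P : ℝ)) * ∑ k : ZMod P, g k) (τ : ZMod P) :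
    ∑ k : ZMod P, g (k - τ) = (P : ℝ) * c := by
  have hP : (P : ℝ) ≠ 0 := Nat.cast_ne_zero.mpr (NeZero.ne P)
  rw [sum_shift_aux, h]
  field_simp

private lemma key2 {P : ℕ} [NeZero P] (g h : ZMod P → ℝ) (cg ch : ℝ)
    (hg : cg = (1 / (P : ℝ)) * ∑ k : ZMod P, g k)
    (hh : ch = (1 / (P : ℝ)) * ∑ k : ZMod P, h k)
    (hinv : ∀ τ₁ τ₂ τ₁' τ₂' : ZMod P,
      ∑ k : ZMod P, g (k - τ₁) * h (k - τ₂)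
        = ∑ k : ZMod P, g (k - τ₁') * h (k - τ₂'))
    (τ₁ τ₂ : ZMod P) :
    ∑ k : ZMod P, g (k - τ₁) * h (k - τ₂) = (P : ℝ) * cg * ch := by
  have hP : (P : ℝ) ≠ 0 := Nat.cast_ne_zero.mpr (NeZero.ne P)
  have hhsum : ∑ k : ZMod P, h k = (P : ℝ) * ch := by rw [hh]; field_simp
  have h1 : ∑ t : ZMod P, ∑ k : ZMod P, g (k - τ₁) * h (k - t)
      = (P : ℝ) * ∑ k : ZMod P, g (k - τ₁) * h (k - τ₂) := by
    rw [Finset.sum_congr rfl fun t _ => hinv τ₁ t τ₁ τ₂, Finset.sum_const,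
      Finset.card_univ, ZMod.card, nsmul_eq_mul]
  have h2 : ∑ t : ZMod P, ∑ k : ZMod P, g (k - τ₁) * h (k - t)
      = ((P : ℝ) * cg) * ((P : ℝ) * ch) := by
    rw [Finset.sum_comm]
    have inner : ∀ k : ZMod P, ∑ t : ZMod P, g (k - τ₁) * h (k - t)
        = g (k - τ₁) * ((P : ℝ) * ch) := by
      intro k
      rw [← Finset.mul_sum, sum_shift_left, hhsum]
    rw [Finset.sum_congr rfl fun k _ => inner k, ← Finset.sum_mul,
      key1 g cg hg τ₁]
  have h3 : (P : ℝ) * (∑ k : ZMod P, g (k - τ₁) * h (k - τ₂))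
      = (P : ℝ) * ((P : ℝ) * cg * ch) := by rw [← h1, h2]; ring
  exact mul_left_cancel₀ hP h3

private lemma key3 {P : ℕ} [NeZero P] (g h e : ZMod P → ℝ) (cg ch ce : ℝ)
    (he : ce = (1 / (P : ℝ)) * ∑ k : ZMod P, e k)
    (hgh : ∀ τ₁ τ₂ : ZMod P,
      ∑ k : ZMod P, g (k - τ₁) * h (k - τ₂) = (P : ℝ) * cg * ch)
    (hinv : ∀ τ₁ τ₂ τ₃ τ₁' τ₂' τ₃' : ZMod P,
      ∑ k : ZMod P, g (k - τ₁) * h (k - τ₂) * e (k - τ₃)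
        = ∑ k : ZMod P, g (k - τ₁') * h (k - τ₂') * e (k - τ₃'))
    (τ₁ τ₂ τ₃ : ZMod P) :
    ∑ k : ZMod P, g (k - τ₁) * h (k - τ₂) * e (k - τ₃)
      = (P : ℝ) * cg * ch * ce := by
  have hP : (P : ℝ) ≠ 0 := Nat.cast_ne_zero.mpr (NeZero.ne P)
  have hesum : ∑ k : ZMod P, e k = (P : ℝ) * ce := by rw [he]; field_simp
  have h1 : ∑ t : ZMod P, ∑ k : ZMod P, g (k - τ₁) * h (k - τ₂) * e (k - t)
      = (P : ℝ) * ∑ k : ZMod P, g (k - τ₁) * h (k - τ₂) * e (k - τ₃) := by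
    rw [Finset.sum_congr rfl fun t _ => hinv τ₁ τ₂ t τ₁ τ₂ τ₃, Finset.sum_const,
      Finset.card_univ, ZMod.card, nsmul_eq_mul]
  have h2 : ∑ t : ZMod P, ∑ k : ZMod P, g (k - τ₁) * h (k - τ₂) * e (k - t)
      = ((P : ℝ) * cg * ch) * ((P : ℝ) * ce) := by
    rw [Finset.sum_comm]
    have inner : ∀ k : ZMod P, ∑ t : ZMod P, g (k - τ₁) * h (k - τ₂) * e (k - t)
        = g (k - τ₁) * h (k - τ₂) * ((P : ℝ) * ce) := by
      intro k
      rw [← Finset.mul_sum, sum_shift_left, hesum]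
    rw [Finset.sum_congr rfl fun k _ => inner k, ← Finset.sum_mul, hgh τ₁ τ₂]
  have h3 : (P : ℝ) * (∑ k : ZMod P, g (k - τ₁) * h (k - τ₂) * e (k - τ₃))
      = (P : ℝ) * ((P : ℝ) * cg * ch * ce) := by rw [← h1, h2]; ring
  exact mul_left_cancel₀ hP h3

private lemma master {P : ℕ} [NeZero P] (s : ℕ → ZMod P → ℝ) (f : ℕ → ℝ)
    (S : Finset ℕ) (a b c : ℕ)
    (hb0 : b ∉ S → (∀ k, s b k = 0) ∧ f b = 0)
    (hc0 : c ∉ S → (∀ k, s c k = 0) ∧ f c = 0)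
    (hA : ∀ σ : ZMod P, ∑ k : ZMod P, s a (k - σ) = (P : ℝ) * f a)
    (hAB : b ∈ S → ∀ σ₁ σ₂ : ZMod P,
      ∑ k : ZMod P, s a (k - σ₁) * s b (k - σ₂) = (P : ℝ) * f a * f b)
    (hAC : c ∈ S → ∀ σ₁ σ₂ : ZMod P,
      ∑ k : ZMod P, s a (k - σ₁) * s c (k - σ₂) = (P : ℝ) * f a * f c)
    (hABC : b ∈ S → c ∈ S → ∀ σ₁ σ₂ σ₃ : ZMod P,
      ∑ k : ZMod P, s a (k - σ₁) * s b (k - σ₂) * s c (k - σ₃)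
        = (P : ℝ) * f a * f b * f c)
    (τa τb τc : ZMod P) :
    ∑ k : ZMod P, s a (k - τa) * (1 - s b (k - τb)) * (1 - s c (k - τc))
      = (P : ℝ) * f a * (1 - f b) * (1 - f c) := by
  by_cases hb : b ∈ S <;> by_cases hc : c ∈ S
  · have e : ∀ k : ZMod P,
        s a (k - τa) * (1 - s b (k - τb)) * (1 - s c (k - τc))
          = s a (k - τa) - s a (k - τa) * s b (k - τb)
            - (s a (k - τa) * s c (k - τc)
              - s a (k - τa) * s b (k - τb) * s c (k - τc)) := fun k => by ring
    rw [Finset.sum_congr rfl fun k _ => e k, Finset.sum_sub_distrib,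
      Finset.sum_sub_distrib, Finset.sum_sub_distrib, hA τa, hAB hb τa τb,
      hAC hc τa τc, hABC hb hc τa τb τc]
    ring
  · simp only [(hc0 hc).1, sub_zero, mul_one, (hc0 hc).2]
    have e : ∀ k : ZMod P, s a (k - τa) * (1 - s b (k - τb))
        = s a (k - τa) - s a (k - τa) * s b (k - τb) := fun k => by ring
    rw [Finset.sum_congr rfl fun k _ => e k, Finset.sum_sub_distrib, hA τa,
      hAB hb τa τb]
    ring
  · simp only [(hb0 hb).1, sub_zero, mul_one, (hb0 hb).2]
    have e : ∀ k : ZMod P, s a (k - τa) * (1 - s c (k - τc))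
        = s a (k - τa) - s a (k - τa) * s c (k - τc) := fun k => by ring
    rw [Finset.sum_congr rfl fun k _ => e k, Finset.sum_sub_distrib, hA τa,
      hAC hc τa τc]
    ring
  · simp only [(hb0 hb).1, (hb0 hb).2, (hc0 hc).1, (hc0 hc).2, sub_zero, mul_one]
    rw [hA τa]
private lemma pair_inv {P M : ℕ} [NeZero P] (s : ℕ → ZMod P → ℝ)
    (hSI : ∀ i ∈ Finset.Icc 1 M,
      ∀ A ⊆ Finset.Icc i (i + 2) ∩ Finset.Icc 1 M, A.Nonempty →
        ∀ τ τ' : ℕ → ZMod P,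
          ∑ k : ZMod P, ∏ j ∈ A, s j (k - τ j)
            = ∑ k : ZMod P, ∏ j ∈ A, s j (k - τ' j))
    (base a b : ℕ) (hbase : base ∈ Finset.Icc 1 M) (hab : a ≠ b)
    (hsub : ({a, b} : Finset ℕ) ⊆ Finset.Icc base (base + 2) ∩ Finset.Icc 1 M) :
    ∀ τ₁ τ₂ τ₁' τ₂' : ZMod P,
      ∑ k : ZMod P, s a (k - τ₁) * s b (k - τ₂)
        = ∑ k : ZMod P, s a (k - τ₁') * s b (k - τ₂') := by
  intro τ₁ τ₂ τ₁' τ₂'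
  have hba : ¬ b = a := fun h => hab h.symm
  have h := hSI base hbase {a, b} hsub ⟨a, by simp⟩
    (fun j => if j = a then τ₁ else τ₂) (fun j => if j = a then τ₁' else τ₂')
  simpa [Finset.prod_pair hab, hba] using h

private lemma triple_inv {P M : ℕ} [NeZero P] (s : ℕ → ZMod P → ℝ)
    (hSI : ∀ i ∈ Finset.Icc 1 M,
      ∀ A ⊆ Finset.Icc i (i + 2) ∩ Finset.Icc 1 M, A.Nonempty →
        ∀ τ τ' : ℕ → ZMod P,
          ∑ k : ZMod P, ∏ j ∈ A, s j (k - τ j)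
            = ∑ k : ZMod P, ∏ j ∈ A, s j (k - τ' j))
    (base a b c : ℕ) (hbase : base ∈ Finset.Icc 1 M)
    (hab : a ≠ b) (hac : a ≠ c) (hbc : b ≠ c)
    (hsub : ({a, b, c} : Finset ℕ) ⊆ Finset.Icc base (base + 2) ∩ Finset.Icc 1 M) :
    ∀ τ₁ τ₂ τ₃ τ₁' τ₂' τ₃' : ZMod P,
      ∑ k : ZMod P, s a (k - τ₁) * s b (k - τ₂) * s c (k - τ₃)
        = ∑ k : ZMod P, s a (k - τ₁') * s b (k - τ₂') * s c (k - τ₃') := by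
  intro τ₁ τ₂ τ₃ τ₁' τ₂' τ₃'
  have hba : ¬ b = a := fun h => hab h.symm
  have hca : ¬ c = a := fun h => hac h.symm
  have hcb : ¬ c = b := fun h => hbc h.symm
  have hnm : a ∉ ({b, c} : Finset ℕ) := by simp [hab, hac]
  have h := hSI base hbase {a, b, c} hsub ⟨a, by simp⟩
    (fun j => if j = a then τ₁ else if j = b then τ₂ else τ₃)
    (fun j => if j = a then τ₁' else if j = b then τ₂' else τ₃')
  simpa [Finset.prod_insert hnm, Finset.prod_pair hbc, hba, hca, hcb,
    mul_assoc] using h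

/-- **Lemma 1.** If consecutively 3-wise shift-invariant protocol sequences (binary
sequences of common period `P`, extended by zero outside indices `1,…,M`) are used, then
for every node `i ∈ {1,…,M}` and all delay offsets, the forward throughput from node `i`
to node `i+1` equals `P·f_i·(1−f_{i+1})·(1−f_{i+2})` and the backward throughput from
node `i` to node `i−1` equals `P·f_i·(1−f_{i−1})·(1−f_{i−2})`. -/
theorem throughput_of_shift_invariant (P M : ℕ) [NeZero P]
    (s : ℕ → ZMod P → ℝ) (f : ℕ → ℝ)
    (hbin : ∀ j k, s j k = 0 ∨ s j k = 1)
    (hzero : ∀ j, j ∉ Finset.Icc 1 M → (∀ k, s j k = 0))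
    (hfzero : ∀ j, j ∉ Finset.Icc 1 M → f j = 0)
    (hduty : ∀ j, f j = (1 / (P : ℝ)) * ∑ k : ZMod P, s j k)
    (hSI : ∀ i ∈ Finset.Icc 1 M,
      ∀ A ⊆ Finset.Icc i (i + 2) ∩ Finset.Icc 1 M, A.Nonempty →
        ∀ τ τ' : ℕ → ZMod P,
          ∑ k : ZMod P, ∏ j ∈ A, s j (k - τ j)
            = ∑ k : ZMod P, ∏ j ∈ A, s j (k - τ' j)) :
    ∀ i ∈ Finset.Icc 1 M, ∀ τ : ℕ → ZMod P,
      (∑ k : ZMod P,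
          s i (k - τ i) * (1 - s (i + 1) (k - τ (i + 1))) * (1 - s (i + 2) (k - τ (i + 2)))
        = (P : ℝ) * f i * (1 - f (i + 1)) * (1 - f (i + 2))) ∧
      (∑ k : ZMod P,
          s i (k - τ i) * (1 - s (i - 1) (k - τ (i - 1))) * (1 - s (i - 2) (k - τ (i - 2)))
        = (P : ℝ) * f i * (1 - f (i - 1)) * (1 - f (i - 2))) := by
  intro i hi τ
  have hi' : 1 ≤ i ∧ i ≤ M := Finset.mem_Icc.mp hi
  constructor
  · refine master s f (Finset.Icc 1 M) i (i + 1) (i + 2)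
      (fun h => ⟨hzero _ h, hfzero _ h⟩) (fun h => ⟨hzero _ h, hfzero _ h⟩)
      (fun σ => key1 (s i) (f i) (hduty i) σ) ?_ ?_ ?_ (τ i) (τ (i+1)) (τ (i+2))
    · intro hb σ₁ σ₂
      have hb' := Finset.mem_Icc.mp hb
      refine key2 (s i) (s (i+1)) (f i) (f (i+1)) (hduty i) (hduty (i+1))
        (pair_inv s hSI i i (i+1) hi (by omega) ?_) σ₁ σ₂
      intro j hj
      simp only [Finset.mem_insert, Finset.mem_singleton] at hj
      simp only [Finset.mem_inter, Finset.mem_Icc]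
      omega
    · intro hc σ₁ σ₂
      have hc' := Finset.mem_Icc.mp hc
      refine key2 (s i) (s (i+2)) (f i) (f (i+2)) (hduty i) (hduty (i+2))
        (pair_inv s hSI i i (i+2) hi (by omega) ?_) σ₁ σ₂
      intro j hj
      simp only [Finset.mem_insert, Finset.mem_singleton] at hj
      simp only [Finset.mem_inter, Finset.mem_Icc]
      omega
    · intro hb hc σ₁ σ₂ σ₃
      have hb' := Finset.mem_Icc.mp hb
      have hc' := Finset.mem_Icc.mp hc
      refine key3 (s i) (s (i+1)) (s (i+2)) (f i) (f (i+1)) (f (i+2))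
        (hduty (i+2)) ?_
        (triple_inv s hSI i i (i+1) (i+2) hi (by omega) (by omega) (by omega) ?_)
        σ₁ σ₂ σ₃
      · intro τ₁ τ₂
        refine key2 (s i) (s (i+1)) (f i) (f (i+1)) (hduty i) (hduty (i+1))
          (pair_inv s hSI i i (i+1) hi (by omega) ?_) τ₁ τ₂
        intro j hj
        simp only [Finset.mem_insert, Finset.mem_singleton] at hj
        simp only [Finset.mem_inter, Finset.mem_Icc]
        omega
      · intro j hj
        simp only [Finset.mem_insert, Finset.mem_singleton] at hj
        simp only [Finset.mem_inter, Finset.mem_Icc]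
        omega
  · refine master s f (Finset.Icc 1 M) i (i - 1) (i - 2)
      (fun h => ⟨hzero _ h, hfzero _ h⟩) (fun h => ⟨hzero _ h, hfzero _ h⟩)
      (fun σ => key1 (s i) (f i) (hduty i) σ) ?_ ?_ ?_ (τ i) (τ (i-1)) (τ (i-2))
    · intro hb σ₁ σ₂
      have hb' := Finset.mem_Icc.mp hb
      refine key2 (s i) (s (i-1)) (f i) (f (i-1)) (hduty i) (hduty (i-1))
        (pair_inv s hSI (i-1) i (i-1) (by simp only [Finset.mem_Icc]; omega)
          (by omega) ?_) σ₁ σ₂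
      intro j hj
      simp only [Finset.mem_insert, Finset.mem_singleton] at hj
      simp only [Finset.mem_inter, Finset.mem_Icc]
      omega
    · intro hc σ₁ σ₂
      have hc' := Finset.mem_Icc.mp hc
      refine key2 (s i) (s (i-2)) (f i) (f (i-2)) (hduty i) (hduty (i-2))
        (pair_inv s hSI (i-2) i (i-2) (by simp only [Finset.mem_Icc]; omega)
          (by omega) ?_) σ₁ σ₂
      intro j hj
      simp only [Finset.mem_insert, Finset.mem_singleton] at hj
      simp only [Finset.mem_inter, Finset.mem_Icc]
      omega
    · intro hb hc σ₁ σ₂ σ₃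
      have hb' := Finset.mem_Icc.mp hb
      have hc' := Finset.mem_Icc.mp hc
      refine key3 (s i) (s (i-1)) (s (i-2)) (f i) (f (i-1)) (f (i-2))
        (hduty (i-2)) ?_
        (triple_inv s hSI (i-2) i (i-1) (i-2)
          (by simp only [Finset.mem_Icc]; omega)
          (by omega) (by omega) (by omega) ?_)
        σ₁ σ₂ σ₃
      · intro τ₁ τ₂
        refine key2 (s i) (s (i-1)) (f i) (f (i-1)) (hduty i) (hduty (i-1))
          (pair_inv s hSI (i-1) i (i-1) (by simp only [Finset.mem_Icc]; omega)
            (by omega) ?_) τ₁ τ₂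
        intro j hj
        simp only [Finset.mem_insert, Finset.mem_singleton] at hj
        simp only [Finset.mem_inter, Finset.mem_Icc]
        omega
      · intro j hj
        simp only [Finset.mem_insert, Finset.mem_singleton] at hj
        simp only [Finset.mem_inter, Finset.mem_Icc]
        omega
end

section
/- Let s_1, s_2, s_3 be binary sequences of common period P such that for every nonempty subset A ⊆ {1,2,3} the generalized Hamming cross-correlation of (s_j)_{j∈A} is independent of the shifts. Then the quantity Σ_{k ∈ ZMod P} s_1(k−τ_1)·(1−s_2(k−τ_2))·(1−s_3(k−τ_3)) is independent of the shifts (τ_1, τ_2, τ_3) ∈ (ZMod P)³, i.e., it equals its value at τ_1 = τ_2 = τ_3 = 0. -/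
/-- If the generalized Hamming cross-correlations of three binary sequences of common
period `P` (over all nonempty subsets of the three sequences) are independent of the
shifts, then the throughput quantity
`Σ_k s₁(k−τ₁)(1−s₂(k−τ₂))(1−s₃(k−τ₃))` is independent of the shifts, i.e., it equals
its value at `τ₁ = τ₂ = τ₃ = 0`. -/
theorem throughput_shift_independent (P : ℕ) [NeZero P]
    (s : Fin 3 → ZMod P → ℝ)
    (hbin : ∀ j k, s j k = 0 ∨ s j k = 1)
    (hSI : ∀ A : Finset (Fin 3), A.Nonempty →
      ∀ τ τ' : Fin 3 → ZMod P,
        ∑ k : ZMod P, ∏ j ∈ A, s j (k - τ j)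
          = ∑ k : ZMod P, ∏ j ∈ A, s j (k - τ' j)) :
    ∀ τ : Fin 3 → ZMod P,
      ∑ k : ZMod P, s 0 (k - τ 0) * (1 - s 1 (k - τ 1)) * (1 - s 2 (k - τ 2))
        = ∑ k : ZMod P, s 0 k * (1 - s 1 k) * (1 - s 2 k) := by
  intro τ
  have key : ∀ σ : Fin 3 → ZMod P,
      ∑ k : ZMod P, s 0 (k - σ 0) * (1 - s 1 (k - σ 1)) * (1 - s 2 (k - σ 2))
        = (∑ k : ZMod P, ∏ j ∈ ({0} : Finset (Fin 3)), s j (k - σ j))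
          - (∑ k : ZMod P, ∏ j ∈ ({0, 1} : Finset (Fin 3)), s j (k - σ j))
          - (∑ k : ZMod P, ∏ j ∈ ({0, 2} : Finset (Fin 3)), s j (k - σ j))
          + (∑ k : ZMod P, ∏ j ∈ ({0, 1, 2} : Finset (Fin 3)), s j (k - σ j)) := by
    intro σ
    rw [← Finset.sum_sub_distrib, ← Finset.sum_sub_distrib, ← Finset.sum_add_distrib]
    apply Finset.sum_congr rfl
    intro k _
    simp [Finset.prod_insert, Finset.mem_insert, Finset.mem_singleton]
    ring
  rw [key τ,
      hSI {0} ⟨0, by simp⟩ τ (fun _ => 0),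
      hSI {0, 1} ⟨0, by simp⟩ τ (fun _ => 0),
      hSI {0, 2} ⟨0, by simp⟩ τ (fun _ => 0),
      hSI {0, 1, 2} ⟨0, by simp⟩ τ (fun _ => 0)]
  have h0 := key (fun _ => 0)
  simp only [sub_zero] at h0 ⊢
  exact h0.symm
end

section
/- Fix integers d ≥ 1, M ≥ 1 and natural numbers n_1, …, n_M with n_i ≤ d for every i. Define binary sequences s_1, …, s_M of common period P = d³ as follows: for k ∈ ZMod d³, if i ≡ 1 (mod 3) then s_i(k) = 1 iff (k mod d) < n_i; if i ≡ 2 (mod 3) then s_i(k) = 1 iff (k mod d²) < d·n_i; if i ≡ 0 (mod 3) then s_i(k) = 1 iff (k mod d³) < d²·n_i (here 'k mod q', for q ∈ {d, d², d³} dividing d³, denotes the representative in {0,…,q−1} of the image of k in ZMod q). Then this family is consecutively 3-wise shift-invariant: for every i ∈ {1,…,M} and every nonempty subset A ⊆ {i, i+1, i+2} ∩ {1,…,M}, the generalized Hamming cross-correlation Σ_{k ∈ ZMod d³} Π_{j∈A} s_j(k−τ_j) is independent of the shifts (τ_j)_{j∈A} ∈ (ZMod d³)^A. -/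
lemma digit_mod (X a D dd : ℕ) (hD : 0 < D) (hdd : 0 < dd) :
    (X + a * D) % (D * dd) = X % D + ((X / D + a) % dd) * D := by
  have h1 : X + a * D
      = (X % D + ((X / D + a) % dd) * D) + ((X / D + a) / dd) * (D * dd) := by
    have hX := Nat.div_add_mod X D
    have hT := Nat.div_add_mod (X / D + a) dd
    nlinarith [hX, hT]
  rw [h1, Nat.add_mul_mod_self_right, Nat.mod_eq_of_lt]
  have h2 : X % D < D := Nat.mod_lt _ hD
  have h3 : (X / D + a) % dd < dd := Nat.mod_lt _ hdd
  nlinarith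

lemma val_add_natCast_mod (P : ℕ) [NeZero P] (x : ZMod P) (t e : ℕ) (he : e ∣ P) :
    (x + (t : ZMod P)).val % e = (x.val + t) % e := by
  have h1 : (x + (t : ZMod P)).val = (x.val + t % P) % P := by
    rw [ZMod.val_add, ZMod.val_natCast]
  rw [h1, Nat.mod_mod_of_dvd _ he, Nat.add_mod, Nat.mod_mod_of_dvd _ he, ← Nat.add_mod]

lemma sum_indicator_val_lt (dd m : ℕ) [NeZero dd] (hm : m ≤ dd) :
    ∑ a : ZMod dd, (if a.val < m then (1:ℝ) else 0) = m := by
  have h1 : ∑ a : ZMod dd, (if a.val < m then (1:ℝ) else 0)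
      = ∑ t ∈ Finset.range dd, (if t < m then (1:ℝ) else 0) := by
    refine Finset.sum_nbij' (fun a => a.val) (fun t => (t : ZMod dd)) ?_ ?_ ?_ ?_ ?_
    · intro a _; simp [ZMod.val_lt]
    · intro t _; simp
    · intro a _; simp [ZMod.natCast_val, ZMod.cast_id]
    · intro t ht; simp only [Finset.mem_range] at ht; exact ZMod.val_cast_of_lt ht
    · intro a _; rfl
  rw [h1, Finset.sum_boole]
  have h2 : (Finset.range dd).filter (· < m) = Finset.range m := by
    ext t; simp; omega
  rw [h2, Finset.card_range]

lemma Kgen (d : ℕ) (hd : 1 ≤ d) [NeZero (d ^ 3)] [NeZero d] (D m : ℕ) (hD : 0 < D)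
    (hdvd : D * d ∣ d ^ 3) (hm : m ≤ d) (x : ZMod (d ^ 3)) :
    ∑ a : ZMod d, (if (x + ((a.val * D : ℕ) : ZMod (d ^ 3))).val % (D * d) < D * m
      then (1:ℝ) else 0) = m := by
  have hrw : ∀ a : ZMod d,
      ((x + ((a.val * D : ℕ) : ZMod (d ^ 3))).val % (D * d) < D * m)
        ↔ (((x.val / D : ℕ) : ZMod d) + a).val < m := by
    intro a
    rw [val_add_natCast_mod _ x _ _ hdvd, digit_mod _ _ _ _ hD (by omega)]
    have hu : x.val % D < D := Nat.mod_lt _ hD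
    have hval : (((x.val / D : ℕ) : ZMod d) + a).val = (x.val / D + a.val) % d := by
      rw [ZMod.val_add, ZMod.val_natCast, Nat.mod_add_mod]
    rw [hval]
    have hw : (x.val / D + a.val) % d < d := Nat.mod_lt _ (by omega)
    constructor
    · intro h; by_contra hc; push_neg at hc
      have h5 : m * D ≤ ((x.val / D + a.val) % d) * D := Nat.mul_le_mul_right D hc
      have h6 : D * m = m * D := Nat.mul_comm D m
      omega
    · intro h
      have h5 : ((x.val / D + a.val) % d + 1) * D ≤ m * D :=
        Nat.mul_le_mul_right D (Nat.succ_le_of_lt h)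
      nlinarith
  simp only [hrw]
  have := Fintype.sum_equiv (Equiv.addLeft (((x.val / D : ℕ) : ZMod d)))
    (fun a : ZMod d => if (((x.val / D : ℕ) : ZMod d) + a).val < m then (1:ℝ) else 0)
    (fun a : ZMod d => if a.val < m then (1:ℝ) else 0) (fun a => rfl)
  exact this.trans (sum_indicator_val_lt d m hm)

lemma triple_sum (d : ℕ) (hd : 1 ≤ d) [NeZero (d ^ 3)] [NeZero d] (F : ZMod (d ^ 3) → ℝ) :
    ∑ k : ZMod (d ^ 3), F k
      = ∑ a : ZMod d, ∑ b : ZMod d, ∑ c : ZMod d,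
          F (((a.val + b.val * d + c.val * d ^ 2 : ℕ) : ZMod (d ^ 3))) := by
  have hbij : Function.Bijective
      (fun p : ZMod d × ZMod d × ZMod d =>
        ((p.1.val + p.2.1.val * d + p.2.2.val * d ^ 2 : ℕ) : ZMod (d ^ 3))) := by
    rw [Fintype.bijective_iff_injective_and_card]
    constructor
    · rintro ⟨a, b, c⟩ ⟨a', b', c'⟩ h
      simp only at h
      have hlt : ∀ (u v w : ZMod d), u.val + v.val * d + w.val * d ^ 2 < d ^ 3 := by
        intro u v w
        have h1 := ZMod.val_lt u; have h2 := ZMod.val_lt v; have h3 := ZMod.val_lt w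
        nlinarith [sq_nonneg d]
      have hval := congrArg ZMod.val h
      rw [ZMod.val_cast_of_lt (hlt a b c), ZMod.val_cast_of_lt (hlt a' b' c')] at hval
      have ha := ZMod.val_lt a; have hb := ZMod.val_lt b; have hc := ZMod.val_lt c
      have ha' := ZMod.val_lt a'; have hb' := ZMod.val_lt b'; have hc' := ZMod.val_lt c'
      have e1 : a.val + (b.val + c.val * d) * d = a'.val + (b'.val + c'.val * d) * d := by
        ring_nf at hval ⊢; linarith [hval]
      have hmoda : a.val = a'.val := by
        have := congrArg (· % d) e1
        simpa [Nat.add_mul_mod_self_right, Nat.mod_eq_of_lt ha, Nat.mod_eq_of_lt ha'] using this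
      have e2 : b.val + c.val * d = b'.val + c'.val * d := by
        have hd0 : 0 < d := by omega
        have : (b.val + c.val * d) * d = (b'.val + c'.val * d) * d := by omega
        exact Nat.eq_of_mul_eq_mul_right hd0 this
      have hmodb : b.val = b'.val := by
        have := congrArg (· % d) e2
        simpa [Nat.add_mul_mod_self_right, Nat.mod_eq_of_lt hb, Nat.mod_eq_of_lt hb'] using this
      have hmodc : c.val = c'.val := by
        have hd0 : 0 < d := by omega
        have : c.val * d = c'.val * d := by omega
        exact Nat.eq_of_mul_eq_mul_right hd0 this
      have hainj : a = a' := ZMod.val_injective d hmoda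
      have hbinj : b = b' := ZMod.val_injective d hmodb
      have hcinj : c = c' := ZMod.val_injective d hmodc
      simp [hainj, hbinj, hcinj]
    · simp [ZMod.card]; ring
  rw [← Fintype.sum_bijective _ hbij _ F (fun p => rfl)]
  rw [Fintype.sum_prod_type]
  refine Finset.sum_congr rfl fun a _ => ?_
  rw [Fintype.sum_prod_type]
noncomputable def indf (d r mm : ℕ) (k : ZMod (d ^ 3)) : ℝ :=
  if k.val % d ^ r < d ^ (r - 1) * mm then 1 else 0

lemma indf_drop (d r mm t : ℕ) [NeZero (d ^ 3)] (hr : d ^ r ∣ d ^ 3) (ht : d ^ r ∣ t)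
    (y : ZMod (d ^ 3)) :
    indf d r mm (y + (t : ZMod (d ^ 3))) = indf d r mm y := by
  unfold indf
  rw [val_add_natCast_mod _ y t _ hr]
  obtain ⟨u, rfl⟩ := ht
  rw [Nat.mul_comm, Nat.add_mul_mod_self_right]

lemma H1 (d : ℕ) (hd : 1 ≤ d) [NeZero (d ^ 3)] [NeZero d] (mm : ℕ) (hm : mm ≤ d)
    (y : ZMod (d ^ 3)) :
    ∑ a : ZMod d, indf d 1 mm (y + ((a.val : ℕ) : ZMod (d ^ 3))) = mm := by
  have := Kgen d hd 1 mm one_pos (by rw [one_mul]; exact dvd_pow_self d (by omega)) hm y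
  simpa [indf, mul_one, one_mul, pow_one, pow_zero] using this

lemma H2 (d : ℕ) (hd : 1 ≤ d) [NeZero (d ^ 3)] [NeZero d] (mm : ℕ) (hm : mm ≤ d)
    (y : ZMod (d ^ 3)) :
    ∑ b : ZMod d, indf d 2 mm (y + ((b.val * d : ℕ) : ZMod (d ^ 3))) = mm := by
  have := Kgen d hd d mm (by omega) (by rw [← pow_two]; exact pow_dvd_pow d (by omega)) hm y
  simpa [indf, pow_two, pow_one] using this

lemma H3 (d : ℕ) (hd : 1 ≤ d) [NeZero (d ^ 3)] [NeZero d] (mm : ℕ) (hm : mm ≤ d)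
    (y : ZMod (d ^ 3)) :
    ∑ c : ZMod d, indf d 3 mm (y + ((c.val * d ^ 2 : ℕ) : ZMod (d ^ 3))) = mm := by
  have := Kgen d hd (d ^ 2) mm (by positivity) (by rw [← pow_succ]) hm y
  simpa [indf, pow_succ] using this

lemma norm1 (d : ℕ) [NeZero (d ^ 3)] (mm : ℕ) (τ1 : ZMod (d ^ 3)) (a b c : ZMod d) :
    indf d 1 mm ((((a.val + b.val * d + c.val * d ^ 2 : ℕ) : ZMod (d ^ 3))) - τ1)
      = indf d 1 mm ((- τ1) + ((a.val : ℕ) : ZMod (d ^ 3))) := by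
  rw [show (((a.val + b.val * d + c.val * d ^ 2 : ℕ) : ZMod (d ^ 3))) - τ1
      = ((- τ1) + ((a.val : ℕ) : ZMod (d ^ 3)))
        + ((b.val * d + c.val * d ^ 2 : ℕ) : ZMod (d ^ 3)) by push_cast; ring]
  exact indf_drop d 1 mm _ (pow_dvd_pow d (by omega))
    (by rw [pow_one]; exact ⟨b.val + c.val * d, by ring⟩) _

lemma norm2 (d : ℕ) [NeZero (d ^ 3)] (mm : ℕ) (τ2 : ZMod (d ^ 3)) (a b c : ZMod d) :
    indf d 2 mm ((((a.val + b.val * d + c.val * d ^ 2 : ℕ) : ZMod (d ^ 3))) - τ2)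
      = indf d 2 mm ((((a.val : ℕ) : ZMod (d ^ 3)) - τ2)
          + ((b.val * d : ℕ) : ZMod (d ^ 3))) := by
  rw [show (((a.val + b.val * d + c.val * d ^ 2 : ℕ) : ZMod (d ^ 3))) - τ2
      = (((((a.val : ℕ) : ZMod (d ^ 3)) - τ2) + ((b.val * d : ℕ) : ZMod (d ^ 3))))
        + ((c.val * d ^ 2 : ℕ) : ZMod (d ^ 3)) by push_cast; ring]
  exact indf_drop d 2 mm _ (pow_dvd_pow d (by omega)) ⟨c.val, by ring⟩ _

lemma norm3 (d : ℕ) [NeZero (d ^ 3)] (mm : ℕ) (τ3 : ZMod (d ^ 3)) (a b c : ZMod d) :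
    indf d 3 mm ((((a.val + b.val * d + c.val * d ^ 2 : ℕ) : ZMod (d ^ 3))) - τ3)
      = indf d 3 mm ((((a.val + b.val * d : ℕ) : ZMod (d ^ 3)) - τ3)
          + ((c.val * d ^ 2 : ℕ) : ZMod (d ^ 3))) := by
  congr 1
  push_cast
  ring

lemma main_count (d : ℕ) (hd : 1 ≤ d) [NeZero (d ^ 3)] [NeZero d]
    (S : Finset ℕ) (hS : S ⊆ ({1, 2, 3} : Finset ℕ))
    (m : ℕ → ℕ) (hm : ∀ r ∈ S, m r ≤ d) (τ : ℕ → ZMod (d ^ 3)) :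
    ∑ k : ZMod (d ^ 3), ∏ r ∈ S, indf d r (m r) (k - τ r)
      = (d : ℝ) ^ (3 - S.card) * ∏ r ∈ S, (m r : ℝ) := by
  have hmem : S ∈ ({1, 2, 3} : Finset ℕ).powerset := Finset.mem_powerset.2 hS
  fin_cases hmem <;>
    simp only [Finset.prod_mk, Finset.card_mk, Multiset.map_coe, Multiset.prod_coe,
      Multiset.coe_card, List.map_cons, List.map_nil, List.prod_cons, List.prod_nil,
      List.length_cons, List.length_nil, mul_one]
  -- case ∅
  · simp [Finset.card_univ, ZMod.card]
    try ring
  -- case {1}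
  · have hm1 : m 1 ≤ d := hm 1 (by decide)
    rw [triple_sum d hd]
    simp only [norm1]
    simp only [Finset.sum_const, Finset.card_univ, ZMod.card, nsmul_eq_mul]
    simp only [← Finset.mul_sum]
    rw [H1 d hd (m 1) hm1]
    norm_num
    try ring
  -- case {2}
  · have hm2 : m 2 ≤ d := hm 2 (by decide)
    rw [triple_sum d hd]
    simp only [norm2]
    simp only [Finset.sum_const, Finset.card_univ, ZMod.card, nsmul_eq_mul]
    simp only [← Finset.mul_sum]
    conv_lhs => enter [2, 2, a]; rw [H2 d hd (m 2) hm2]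
    simp only [Finset.sum_const, Finset.card_univ, ZMod.card, nsmul_eq_mul]
    norm_num
    try ring
  -- case {1,2}
  · have hm1 : m 1 ≤ d := hm 1 (by decide)
    have hm2 : m 2 ≤ d := hm 2 (by decide)
    rw [triple_sum d hd]
    simp only [norm1, norm2]
    simp only [Finset.sum_const, Finset.card_univ, ZMod.card, nsmul_eq_mul]
    conv_lhs => enter [2, a]; rw [← Finset.mul_sum, ← Finset.mul_sum, H2 d hd (m 2) hm2]
    rw [← Finset.mul_sum, ← Finset.sum_mul, H1 d hd (m 1) hm1]
    norm_num
    try ring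
  -- case {3}
  · have hm3 : m 3 ≤ d := hm 3 (by decide)
    rw [triple_sum d hd]
    simp only [norm3]
    conv_lhs => enter [2, a, 2, b]; rw [H3 d hd (m 3) hm3]
    simp only [Finset.sum_const, Finset.card_univ, ZMod.card, nsmul_eq_mul]
    norm_num
    try ring
  -- case {1,3}
  · have hm1 : m 1 ≤ d := hm 1 (by decide)
    have hm3 : m 3 ≤ d := hm 3 (by decide)
    rw [triple_sum d hd]
    simp only [norm1, norm3]
    conv_lhs => enter [2, a, 2, b]; rw [← Finset.mul_sum, H3 d hd (m 3) hm3]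
    simp only [Finset.sum_const, Finset.card_univ, ZMod.card, nsmul_eq_mul]
    rw [← Finset.mul_sum, ← Finset.sum_mul, H1 d hd (m 1) hm1]
    norm_num
    try ring
  -- case {2,3}
  · have hm2 : m 2 ≤ d := hm 2 (by decide)
    have hm3 : m 3 ≤ d := hm 3 (by decide)
    rw [triple_sum d hd]
    simp only [norm2, norm3]
    conv_lhs => enter [2, a, 2, b]; rw [← Finset.mul_sum, H3 d hd (m 3) hm3]
    conv_lhs => enter [2, a]; rw [← Finset.sum_mul, H2 d hd (m 2) hm2]
    simp only [Finset.sum_const, Finset.card_univ, ZMod.card, nsmul_eq_mul]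
    norm_num
    try ring
  -- case {1,2,3}
  · have hm1 : m 1 ≤ d := hm 1 (by decide)
    have hm2 : m 2 ≤ d := hm 2 (by decide)
    have hm3 : m 3 ≤ d := hm 3 (by decide)
    rw [triple_sum d hd]
    simp only [norm1, norm2, norm3]
    conv_lhs => enter [2, a, 2, b]; rw [← Finset.mul_sum, ← Finset.mul_sum, H3 d hd (m 3) hm3]
    conv_lhs => enter [2, a]; rw [← Finset.mul_sum, ← Finset.sum_mul, H2 d hd (m 2) hm2]
    rw [← Finset.sum_mul, H1 d hd (m 1) hm1]
    norm_num
    try ring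

/-- **Proposition 1.** The protocol sequences of period `d³` constructed by concatenating
copies of the vector `u(n,q)` (with `n` ones followed by `q−n` zeros) at scale `d`, `d²`
or `d³` according to `i mod 3` are consecutively 3-wise shift-invariant. -/
theorem construction_consecutively_3wise_shift_invariant
    (d M : ℕ) (hd : 1 ≤ d) (hM : 1 ≤ M) [NeZero (d ^ 3)]
    (n : ℕ → ℕ) (hn : ∀ i ∈ Finset.Icc 1 M, n i ≤ d)
    (s : ℕ → ZMod (d ^ 3) → ℝ)
    (hs : ∀ i ∈ Finset.Icc 1 M, ∀ k : ZMod (d ^ 3),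
      s i k =
        if i % 3 = 1 then (if k.val % d < n i then 1 else 0)
        else if i % 3 = 2 then (if k.val % d ^ 2 < d * n i then 1 else 0)
        else (if k.val % d ^ 3 < d ^ 2 * n i then 1 else 0)) :
    ∀ i ∈ Finset.Icc 1 M,
      ∀ A ⊆ Finset.Icc i (i + 2) ∩ Finset.Icc 1 M, A.Nonempty →
        ∀ τ τ' : ℕ → ZMod (d ^ 3),
          ∑ k : ZMod (d ^ 3), ∏ j ∈ A, s j (k - τ j)
            = ∑ k : ZMod (d ^ 3), ∏ j ∈ A, s j (k - τ' j) := by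
  intro i hi A hA hne τ τ'
  haveI : NeZero d := ⟨by omega⟩
  classical
  set σ : ℕ → ℕ := fun j => if j % 3 = 1 then 1 else if j % 3 = 2 then 2 else 3 with hσdef
  have hA1 : ∀ j ∈ A, j ∈ Finset.Icc i (i + 2) :=
    fun j hj => (Finset.mem_inter.1 (hA hj)).1
  have hA2 : ∀ j ∈ A, j ∈ Finset.Icc 1 M :=
    fun j hj => (Finset.mem_inter.1 (hA hj)).2
  have hinj : Set.InjOn σ A := by
    intro j hj j' hj' h
    have h1 := Finset.mem_Icc.1 (hA1 j hj)
    have h2 := Finset.mem_Icc.1 (hA1 j' hj')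
    have h3 : j % 3 = j' % 3 := by
      simp only [hσdef] at h
      split_ifs at h <;> omega
    omega
  have hinv : ∀ j ∈ A, Function.invFunOn σ A (σ j) = j :=
    fun j hj => hinj.leftInvOn_invFunOn hj
  have hsind : ∀ j ∈ A, ∀ k : ZMod (d ^ 3), s j k = indf d (σ j) (n j) k := by
    intro j hj k
    rw [hs j (hA2 j hj) k]
    have h3 : j % 3 = 0 ∨ j % 3 = 1 ∨ j % 3 = 2 := by omega
    unfold indf
    rcases h3 with h | h | h <;> simp [hσdef, h, pow_one]
  have himg : A.image σ ⊆ ({1, 2, 3} : Finset ℕ) := by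
    intro r hr
    obtain ⟨j, _, rfl⟩ := Finset.mem_image.1 hr
    simp only [hσdef, Finset.mem_insert, Finset.mem_singleton]
    split_ifs <;> simp
  have hm' : ∀ r ∈ A.image σ, n (Function.invFunOn σ A r) ≤ d := by
    intro r hr
    obtain ⟨j, hj, rfl⟩ := Finset.mem_image.1 hr
    rw [hinv j hj]
    exact hn j (hA2 j hj)
  have key : ∀ τ'' : ℕ → ZMod (d ^ 3),
      ∑ k : ZMod (d ^ 3), ∏ j ∈ A, s j (k - τ'' j)
        = (d : ℝ) ^ (3 - (A.image σ).card)
            * ∏ r ∈ A.image σ, ((n (Function.invFunOn σ A r) : ℝ)) := by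
    intro τ''
    have hprod : ∀ k : ZMod (d ^ 3),
        ∏ j ∈ A, s j (k - τ'' j)
          = ∏ r ∈ A.image σ,
              indf d r (n (Function.invFunOn σ A r))
                (k - τ'' (Function.invFunOn σ A r)) := by
      intro k
      rw [Finset.prod_image (fun x hx y hy h => hinj hx hy h)]
      refine Finset.prod_congr rfl fun j hj => ?_
      rw [hsind j hj, hinv j hj]
    simp only [hprod]
    exact main_count d hd (A.image σ) himg
      (fun r => n (Function.invFunOn σ A r))
      hm' (fun r => τ'' (Function.invFunOn σ A r))
  rw [key τ, key τ']
end

section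
/- For every integer d ≥ 1, all natural numbers n_1, n_2, n_3 with n_1, n_2, n_3 ≤ d, and all integers τ_1, τ_2, τ_3: Σ_{k=0}^{d³−1} χ[((k−τ_1) mod d) < n_1] · χ[((k−τ_2) mod d²) < d·n_2] · χ[((k−τ_3) mod d³) < d²·n_3] = n_1·n_2·n_3. In particular, this triple correlation is independent of the shifts τ_1, τ_2, τ_3. -/
open Finset

private lemma sum_shift (q : ℕ) (hq : 0 < q) (σ : ℤ) (f : ℤ → ℤ) :
    ∑ k ∈ range q, f (((k : ℤ) - σ) % q) = ∑ k ∈ range q, f k := by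
  have hq' : (0:ℤ) < (q:ℤ) := by exact_mod_cast hq
  refine Finset.sum_nbij' (fun k => (((k : ℤ) - σ) % q).toNat)
    (fun k => (((k : ℤ) + σ) % q).toNat) ?_ ?_ ?_ ?_ ?_
  · intro a ha
    simp only [mem_range] at ha ⊢
    have h1 := Int.emod_nonneg ((a:ℤ) - σ) hq'.ne'
    have h2 := Int.emod_lt_of_pos ((a:ℤ) - σ) hq'
    omega
  · intro a ha
    simp only [mem_range] at ha ⊢
    have h1 := Int.emod_nonneg ((a:ℤ) + σ) hq'.ne'
    have h2 := Int.emod_lt_of_pos ((a:ℤ) + σ) hq'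
    omega
  · intro a ha
    simp only [mem_range] at ha
    have h1 := Int.emod_nonneg ((a:ℤ) - σ) hq'.ne'
    have key : ((((((a:ℤ) - σ) % q).toNat : ℤ)) + σ) % q = a := by
      rw [Int.toNat_of_nonneg h1, Int.emod_add_emod]
      have : (a:ℤ) - σ + σ = (a:ℤ) := by ring
      rw [this]
      exact Int.emod_eq_of_lt (by positivity) (by exact_mod_cast ha)
    show ((((((a:ℤ) - σ) % q).toNat : ℤ) + σ) % q).toNat = a
    omega
  · intro a ha
    simp only [mem_range] at ha
    have h1 := Int.emod_nonneg ((a:ℤ) + σ) hq'.ne'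
    have key : ((((((a:ℤ) + σ) % q).toNat : ℤ)) - σ) % q = a := by
      rw [Int.toNat_of_nonneg h1, Int.sub_emod, Int.emod_emod_of_dvd _ dvd_rfl,
        ← Int.sub_emod]
      have : (a:ℤ) + σ - σ = (a:ℤ) := by ring
      rw [this]
      exact Int.emod_eq_of_lt (by positivity) (by exact_mod_cast ha)
    show ((((((a:ℤ) + σ) % q).toNat : ℤ) - σ) % q).toNat = a
    omega
  · intro a ha
    simp only [mem_range] at ha
    have h1 := Int.emod_nonneg ((a:ℤ) - σ) hq'.ne'
    congr 1
    rw [Int.toNat_of_nonneg h1]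

private lemma sum_range_mul' (f : ℕ → ℤ) (a b : ℕ) :
    ∑ k ∈ range (a * b), f k = ∑ i ∈ range a, ∑ j ∈ range b, f (b * i + j) := by
  induction a with
  | zero => simp
  | succ a ih =>
    rw [Nat.succ_mul, Finset.sum_range_add, ih, Finset.sum_range_succ]
    congr 1
    refine sum_congr rfl fun j _ => ?_
    congr 1
    ring

private lemma count_lt (dd n : ℕ) (h : n ≤ dd) :
    ∑ i ∈ range dd, (if (i:ℤ) < (n:ℤ) then (1:ℤ) else 0) = n := by
  rw [← Finset.sum_filter]
  have hf : (range dd).filter (fun i : ℕ => (i:ℤ) < (n:ℤ)) = range n := by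
    ext i
    simp only [Finset.mem_filter, Finset.mem_range]
    omega
  rw [hf]
  simp

private lemma emod_shift_sub (q Q x a b : ℤ) (h : q ∣ Q) :
    ((x - b) % Q - (a - b)) % q = (x - a) % q := by
  rw [Int.sub_emod ((x - b) % Q) (a - b), Int.emod_emod_of_dvd _ h, ← Int.sub_emod]
  congr 1
  ring

private lemma emod_add_mul_cancel (q x y m : ℤ) (h : q ∣ m) : (m * y + x) % q = x % q := by
  obtain ⟨c, rfl⟩ := h
  rw [show q * c * y + x = x + q * (c * y) by ring, Int.add_mul_emod_self_left]

private lemma ind_scale (d' i r n : ℤ) (hd : 0 < d') (hr0 : 0 ≤ r) (hr : r < d') :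
    (d' * i + r < d' * n) ↔ i < n := by
  constructor
  · intro h
    by_contra hc
    push_neg at hc
    nlinarith [mul_le_mul_of_nonneg_left hc hd.le]
  · intro h
    have : i + 1 ≤ n := h
    nlinarith [mul_le_mul_of_nonneg_left this hd.le]

/-- Triple-correlation identity underlying Proposition 1: for the constructed protocol
sequences at scales `d`, `d²`, `d³`, the generalized Hamming cross-correlation over one
period `d³` equals `n₁·n₂·n₃`, independently of the shifts `τ₁, τ₂, τ₃`. -/
theorem triple_correlation_shift_invariant
    (d : ℕ) (hd : 1 ≤ d) (n₁ n₂ n₃ : ℕ)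
    (h₁ : n₁ ≤ d) (h₂ : n₂ ≤ d) (h₃ : n₃ ≤ d)
    (τ₁ τ₂ τ₃ : ℤ) :
    ∑ k ∈ Finset.range (d ^ 3),
        (if ((k : ℤ) - τ₁) % (d : ℤ) < (n₁ : ℤ) then (1 : ℤ) else 0)
          * (if ((k : ℤ) - τ₂) % ((d : ℤ) ^ 2) < (d : ℤ) * (n₂ : ℤ) then 1 else 0)
          * (if ((k : ℤ) - τ₃) % ((d : ℤ) ^ 3) < (d : ℤ) ^ 2 * (n₃ : ℤ) then 1 else 0)
      = (n₁ : ℤ) * n₂ * n₃ := by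
  have hd0 : (0:ℤ) < (d:ℤ) := by exact_mod_cast hd
  have hq2 : 0 < d ^ 2 := by positivity
  have hq3 : 0 < d ^ 3 := by positivity
  have hc2 : ((d ^ 2 : ℕ) : ℤ) = (d:ℤ)^2 := by push_cast; ring
  have hc3 : ((d ^ 3 : ℕ) : ℤ) = (d:ℤ)^3 := by push_cast; ring
  -- innermost correlation at scale d
  have T2 : ∀ σ : ℤ, ∑ s ∈ Finset.range d,
      (if ((s:ℤ) - σ) % (d:ℤ) < (n₁:ℤ) then (1:ℤ) else 0) = (n₁ : ℤ) := by
    intro σ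
    rw [sum_shift d hd σ (fun m => if m < (n₁:ℤ) then (1:ℤ) else 0)]
    exact count_lt d n₁ h₁
  -- two-level correlation at scales d, d² over period d²
  have T1 : ∑ j ∈ Finset.range (d ^ 2),
      (if ((j:ℤ) - (τ₁ - τ₃)) % (d:ℤ) < (n₁:ℤ) then (1:ℤ) else 0)
        * (if ((j:ℤ) - (τ₂ - τ₃)) % ((d:ℤ)^2) < (d:ℤ) * (n₂:ℤ) then 1 else 0)
      = (n₁ : ℤ) * n₂ := by
    calc ∑ j ∈ Finset.range (d ^ 2),
        (if ((j:ℤ) - (τ₁ - τ₃)) % (d:ℤ) < (n₁:ℤ) then (1:ℤ) else 0)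
          * (if ((j:ℤ) - (τ₂ - τ₃)) % ((d:ℤ)^2) < (d:ℤ) * (n₂:ℤ) then 1 else 0)
        = ∑ j ∈ Finset.range (d ^ 2),
          (fun m => (if (m - (τ₁ - τ₂)) % (d:ℤ) < (n₁:ℤ) then (1:ℤ) else 0)
            * (if m < (d:ℤ) * (n₂:ℤ) then 1 else 0)) (((j:ℤ) - (τ₂ - τ₃)) % ((d^2 : ℕ):ℤ)) := by
          refine Finset.sum_congr rfl fun j _ => ?_
          simp only [hc2]
          have e := emod_shift_sub (d:ℤ) ((d:ℤ)^2) (j:ℤ) (τ₁ - τ₃) (τ₂ - τ₃) ⟨(d:ℤ), by ring⟩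
          rw [show τ₁ - τ₃ - (τ₂ - τ₃) = τ₁ - τ₂ by ring] at e
          rw [← e]
      _ = ∑ j ∈ Finset.range (d ^ 2),
          (if ((j:ℤ) - (τ₁ - τ₂)) % (d:ℤ) < (n₁:ℤ) then (1:ℤ) else 0)
            * (if (j:ℤ) < (d:ℤ) * (n₂:ℤ) then 1 else 0) :=
        sum_shift (d^2) hq2 (τ₂ - τ₃) (fun m => (if (m - (τ₁ - τ₂)) % (d:ℤ) < (n₁:ℤ) then (1:ℤ) else 0)
            * (if m < (d:ℤ) * (n₂:ℤ) then 1 else 0))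
      _ = ∑ i ∈ Finset.range d, ∑ s ∈ Finset.range d,
          (if ((s:ℤ) - (τ₁ - τ₂)) % (d:ℤ) < (n₁:ℤ) then (1:ℤ) else 0)
            * (if (i:ℤ) < (n₂:ℤ) then 1 else 0) := by
          rw [show d^2 = d * d by ring, sum_range_mul']
          refine Finset.sum_congr rfl fun i hi => Finset.sum_congr rfl fun s hs => ?_
          simp only [Finset.mem_range] at hi hs
          push_cast
          have e1 : ((d:ℤ) * (i:ℤ) + (s:ℤ) - (τ₁ - τ₂)) % (d:ℤ) = ((s:ℤ) - (τ₁ - τ₂)) % (d:ℤ) := by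
            rw [show (d:ℤ) * (i:ℤ) + (s:ℤ) - (τ₁ - τ₂) = (d:ℤ) * (i:ℤ) + ((s:ℤ) - (τ₁ - τ₂)) by ring]
            exact emod_add_mul_cancel _ _ _ _ ⟨1, by ring⟩
          have e2 : ((d:ℤ) * (i:ℤ) + (s:ℤ) < (d:ℤ) * (n₂:ℤ)) ↔ ((i:ℤ) < (n₂:ℤ)) :=
            ind_scale (d:ℤ) (i:ℤ) (s:ℤ) (n₂:ℤ) hd0 (by positivity) (by exact_mod_cast hs)
          simp only [e1, e2]
      _ = ∑ i ∈ Finset.range d,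
          (∑ s ∈ Finset.range d,
            (if ((s:ℤ) - (τ₁ - τ₂)) % (d:ℤ) < (n₁:ℤ) then (1:ℤ) else 0))
            * (if (i:ℤ) < (n₂:ℤ) then 1 else 0) := by
          exact Finset.sum_congr rfl fun i _ => (Finset.sum_mul _ _ _).symm
      _ = (n₁ : ℤ) * ∑ i ∈ Finset.range d, (if (i:ℤ) < (n₂:ℤ) then (1:ℤ) else 0) := by
          rw [← Finset.mul_sum]
          rw [T2 (τ₁ - τ₂)]
      _ = (n₁ : ℤ) * n₂ := by rw [count_lt d n₂ h₂]
  -- main computation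
  calc ∑ k ∈ Finset.range (d ^ 3),
      (if ((k : ℤ) - τ₁) % (d : ℤ) < (n₁ : ℤ) then (1 : ℤ) else 0)
        * (if ((k : ℤ) - τ₂) % ((d : ℤ) ^ 2) < (d : ℤ) * (n₂ : ℤ) then 1 else 0)
        * (if ((k : ℤ) - τ₃) % ((d : ℤ) ^ 3) < (d : ℤ) ^ 2 * (n₃ : ℤ) then 1 else 0)
      = ∑ k ∈ Finset.range (d ^ 3),
        (fun m => (if (m - (τ₁ - τ₃)) % (d:ℤ) < (n₁:ℤ) then (1:ℤ) else 0)
          * (if (m - (τ₂ - τ₃)) % ((d:ℤ)^2) < (d:ℤ) * (n₂:ℤ) then 1 else 0)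
          * (if m < (d:ℤ)^2 * (n₃:ℤ) then 1 else 0)) (((k:ℤ) - τ₃) % ((d^3 : ℕ):ℤ)) := by
        refine Finset.sum_congr rfl fun k _ => ?_
        simp only [hc3]
        rw [emod_shift_sub (d:ℤ) ((d:ℤ)^3) (k:ℤ) τ₁ τ₃ ⟨(d:ℤ)^2, by ring⟩,
          emod_shift_sub ((d:ℤ)^2) ((d:ℤ)^3) (k:ℤ) τ₂ τ₃ ⟨(d:ℤ), by ring⟩]
    _ = ∑ k ∈ Finset.range (d ^ 3),
        (if ((k:ℤ) - (τ₁ - τ₃)) % (d:ℤ) < (n₁:ℤ) then (1:ℤ) else 0)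
          * (if ((k:ℤ) - (τ₂ - τ₃)) % ((d:ℤ)^2) < (d:ℤ) * (n₂:ℤ) then 1 else 0)
          * (if (k:ℤ) < (d:ℤ)^2 * (n₃:ℤ) then 1 else 0) :=
      sum_shift (d^3) hq3 τ₃ (fun m => (if (m - (τ₁ - τ₃)) % (d:ℤ) < (n₁:ℤ) then (1:ℤ) else 0)
          * (if (m - (τ₂ - τ₃)) % ((d:ℤ)^2) < (d:ℤ) * (n₂:ℤ) then 1 else 0)
          * (if m < (d:ℤ)^2 * (n₃:ℤ) then 1 else 0))
    _ = ∑ i ∈ Finset.range d, ∑ j ∈ Finset.range (d ^ 2),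
        ((if ((j:ℤ) - (τ₁ - τ₃)) % (d:ℤ) < (n₁:ℤ) then (1:ℤ) else 0)
          * (if ((j:ℤ) - (τ₂ - τ₃)) % ((d:ℤ)^2) < (d:ℤ) * (n₂:ℤ) then 1 else 0))
          * (if (i:ℤ) < (n₃:ℤ) then 1 else 0) := by
        rw [show d^3 = d * d^2 by ring, sum_range_mul']
        refine Finset.sum_congr rfl fun i hi => Finset.sum_congr rfl fun j hj => ?_
        simp only [Finset.mem_range] at hi hj
        push_cast
        have e1 : ((d:ℤ)^2 * (i:ℤ) + (j:ℤ) - (τ₁ - τ₃)) % (d:ℤ)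
            = ((j:ℤ) - (τ₁ - τ₃)) % (d:ℤ) := by
          rw [show (d:ℤ)^2 * (i:ℤ) + (j:ℤ) - (τ₁ - τ₃)
              = (d:ℤ)^2 * (i:ℤ) + ((j:ℤ) - (τ₁ - τ₃)) by ring]
          exact emod_add_mul_cancel _ _ _ _ ⟨(d:ℤ), by ring⟩
        have e2 : ((d:ℤ)^2 * (i:ℤ) + (j:ℤ) - (τ₂ - τ₃)) % ((d:ℤ)^2)
            = ((j:ℤ) - (τ₂ - τ₃)) % ((d:ℤ)^2) := by
          rw [show (d:ℤ)^2 * (i:ℤ) + (j:ℤ) - (τ₂ - τ₃)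
              = (d:ℤ)^2 * (i:ℤ) + ((j:ℤ) - (τ₂ - τ₃)) by ring]
          exact emod_add_mul_cancel _ _ _ _ ⟨1, by ring⟩
        have e3 : ((d:ℤ)^2 * (i:ℤ) + (j:ℤ) < (d:ℤ)^2 * (n₃:ℤ)) ↔ ((i:ℤ) < (n₃:ℤ)) :=
          ind_scale ((d:ℤ)^2) (i:ℤ) (j:ℤ) (n₃:ℤ) (by positivity) (by positivity)
            (by exact_mod_cast hj)
        simp only [e1, e2, e3]
    _ = ∑ i ∈ Finset.range d,
        (∑ j ∈ Finset.range (d ^ 2),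
          (if ((j:ℤ) - (τ₁ - τ₃)) % (d:ℤ) < (n₁:ℤ) then (1:ℤ) else 0)
            * (if ((j:ℤ) - (τ₂ - τ₃)) % ((d:ℤ)^2) < (d:ℤ) * (n₂:ℤ) then 1 else 0))
          * (if (i:ℤ) < (n₃:ℤ) then 1 else 0) :=
      Finset.sum_congr rfl fun i _ => (Finset.sum_mul _ _ _).symm
    _ = ((n₁ : ℤ) * n₂) * ∑ i ∈ Finset.range d, (if (i:ℤ) < (n₃:ℤ) then (1:ℤ) else 0) := by
        rw [← Finset.mul_sum, T1]
    _ = (n₁ : ℤ) * n₂ * n₃ := by rw [count_lt d n₃ h₃]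
end

section
/- For every integer d ≥ 1, all natural numbers n_1, n_2 with n_1, n_2 ≤ d, and all integers τ_1, τ_2: Σ_{k=0}^{d²−1} χ[((k−τ_1) mod d) < n_1] · χ[((k−τ_2) mod d²) < d·n_2] = n_1·n_2. In particular, this pairwise Hamming cross-correlation is independent of the shifts τ_1, τ_2. -/
private lemma eq_of_lt_of_emod_eq {n x y : ℤ} (h : x % n = y % n)
    (hx0 : 0 ≤ x) (hxn : x < n) (hy0 : 0 ≤ y) (hyn : y < n) : x = y := by
  rw [← Int.emod_eq_of_lt hx0 hxn, ← Int.emod_eq_of_lt hy0 hyn, h]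

/-- Pairwise case at scales `(d, d²)` underlying Proposition 1: the Hamming
cross-correlation over one period `d²` equals `n₁·n₂`, independently of the shifts. -/
theorem pairwise_correlation_d_dsq_shift_invariant
    (d : ℕ) (hd : 1 ≤ d) (n₁ n₂ : ℕ)
    (h₁ : n₁ ≤ d) (h₂ : n₂ ≤ d)
    (τ₁ τ₂ : ℤ) :
    ∑ k ∈ Finset.range (d ^ 2),
        (if ((k : ℤ) - τ₁) % (d : ℤ) < (n₁ : ℤ) then (1 : ℤ) else 0)
          * (if ((k : ℤ) - τ₂) % ((d : ℤ) ^ 2) < (d : ℤ) * (n₂ : ℤ) then 1 else 0)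
      = (n₁ : ℤ) * n₂ := by
  have hd0 : (0:ℤ) < (d:ℤ) := by exact_mod_cast hd
  have hd2 : (0:ℤ) < (d:ℤ)^2 := by positivity
  have hdvd : (d:ℤ) ∣ (d:ℤ)^2 := ⟨(d:ℤ), by ring⟩
  have hstep : ∀ k ∈ Finset.range (d^2),
      (if ((k : ℤ) - τ₁) % (d : ℤ) < (n₁ : ℤ) then (1 : ℤ) else 0)
          * (if ((k : ℤ) - τ₂) % ((d : ℤ) ^ 2) < (d : ℤ) * (n₂ : ℤ) then 1 else 0)
      = (if ((k : ℤ) - τ₁) % (d : ℤ) < (n₁ : ℤ) ∧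
            ((k : ℤ) - τ₂) % ((d : ℤ) ^ 2) < (d : ℤ) * (n₂ : ℤ) then (1:ℤ) else 0) := by
    intro k _; split_ifs with h1 h2 h3 <;> simp_all
  rw [Finset.sum_congr rfl hstep, Finset.sum_boole]
  have hcard : ((Finset.range (d^2)).filter (fun k : ℕ => ((k : ℤ) - τ₁) % (d : ℤ) < (n₁ : ℤ) ∧
      ((k : ℤ) - τ₂) % ((d : ℤ) ^ 2) < (d : ℤ) * (n₂ : ℤ))).card
      = (Finset.range n₁ ×ˢ Finset.range n₂).card := by
    refine Finset.card_bij' (fun k _ =>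
        ((((k:ℤ) - τ₁) % (d:ℤ)).toNat, ((((k:ℤ) - τ₂) % ((d:ℤ)^2)) / d).toNat))
      (fun p _ =>
        ((τ₂ + (d:ℤ) * p.2 + ((p.1:ℤ) + τ₁ - τ₂) % (d:ℤ)) % ((d:ℤ)^2)).toNat)
      ?_ ?_ ?_ ?_
    -- hi : maps into range n₁ ×ˢ range n₂
    · intro k hk
      simp only [Finset.mem_filter, Finset.mem_range] at hk
      obtain ⟨hk2, hP, hQ⟩ := hk
      simp only [Finset.mem_product, Finset.mem_range]
      constructor
      · have := Int.emod_nonneg ((k:ℤ) - τ₁) (by omega : (d:ℤ) ≠ 0)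
        omega
      · have h0 : (0:ℤ) ≤ ((k:ℤ) - τ₂) % ((d:ℤ)^2) := Int.emod_nonneg _ (by positivity)
        have hlt : (((k:ℤ) - τ₂) % ((d:ℤ)^2)) / d < n₂ := by
          rw [Int.ediv_lt_iff_lt_mul hd0]; linarith [mul_comm (d:ℤ) (n₂:ℤ)]
        have h0' : (0:ℤ) ≤ (((k:ℤ) - τ₂) % ((d:ℤ)^2)) / d := Int.ediv_nonneg h0 hd0.le
        omega
    -- hj : maps into the filter
    · intro p hp
      simp only [Finset.mem_product, Finset.mem_range] at hp
      obtain ⟨ha, hb⟩ := hp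
      have ha' : (p.1:ℤ) < d := by exact_mod_cast lt_of_lt_of_le (by exact_mod_cast ha) (by exact_mod_cast h₁)
      set r0 : ℤ := ((p.1:ℤ) + τ₁ - τ₂) % (d:ℤ) with hr0
      have hr0n : 0 ≤ r0 := Int.emod_nonneg _ (by omega)
      have hr0lt : r0 < d := Int.emod_lt_of_pos _ hd0
      set K : ℤ := (τ₂ + (d:ℤ) * p.2 + r0) % ((d:ℤ)^2) with hK
      have hKn : 0 ≤ K := Int.emod_nonneg _ (by positivity)
      have hKlt : K < (d:ℤ)^2 := Int.emod_lt_of_pos _ hd2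
      have htn : ((K.toNat : ℤ)) = K := Int.toNat_of_nonneg hKn
      -- key congruences
      have hKmod : K ≡ τ₂ + (d:ℤ) * p.2 + r0 [ZMOD ((d:ℤ)^2)] := Int.emod_emod_of_dvd _ dvd_rfl
      have hKmodd : K ≡ τ₂ + (d:ℤ) * p.2 + r0 [ZMOD (d:ℤ)] := hKmod.of_dvd hdvd
      have hr0mod : r0 ≡ (p.1:ℤ) + τ₁ - τ₂ [ZMOD (d:ℤ)] := Int.emod_emod_of_dvd _ dvd_rfl
      have hP : (K - τ₁) % (d:ℤ) = (p.1:ℤ) := by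
        have h1 : K - τ₁ ≡ (τ₂ + (d:ℤ) * p.2 + ((p.1:ℤ) + τ₁ - τ₂)) - τ₁ [ZMOD (d:ℤ)] :=
          (hKmodd.trans ((Int.ModEq.refl (τ₂ + (d:ℤ) * p.2)).add hr0mod)).sub_right τ₁
        have h2 : (τ₂ + (d:ℤ) * p.2 + ((p.1:ℤ) + τ₁ - τ₂)) - τ₁ = (p.1:ℤ) + (d:ℤ) * p.2 := by ring
        have h3 : (K - τ₁) % (d:ℤ) = ((p.1:ℤ) + (d:ℤ) * p.2) % (d:ℤ) := by
          rw [← h2]; exact h1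
        rw [h3, Int.add_mul_emod_self_left, Int.emod_eq_of_lt (by positivity) ha']
      have hQ : (K - τ₂) % ((d:ℤ)^2) = (d:ℤ) * p.2 + r0 := by
        have h1 : K - τ₂ ≡ (d:ℤ) * p.2 + r0 [ZMOD ((d:ℤ)^2)] := by
          have := hKmod.sub_right τ₂
          calc K - τ₂ ≡ τ₂ + (d:ℤ) * p.2 + r0 - τ₂ [ZMOD ((d:ℤ)^2)] := this
            _ = (d:ℤ) * p.2 + r0 := by ring
        have hb' : (p.2:ℤ) ≤ (d:ℤ) - 1 := by
          have : (p.2:ℤ) < (n₂:ℤ) := by exact_mod_cast hb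
          have : (n₂:ℤ) ≤ d := by exact_mod_cast h₂
          omega
        have hub : (d:ℤ) * p.2 + r0 < (d:ℤ)^2 := by nlinarith
        have hlb : 0 ≤ (d:ℤ) * p.2 + r0 := by positivity
        rw [show ((K - τ₂) % ((d:ℤ)^2)) = ((d:ℤ) * p.2 + r0) % ((d:ℤ)^2) from h1,
          Int.emod_eq_of_lt hlb hub]
      simp only [Finset.mem_filter, Finset.mem_range]
      refine ⟨?_, ?_, ?_⟩
      · have : (K.toNat : ℤ) < ((d^2 : ℕ) : ℤ) := by push_cast; omega
        exact_mod_cast this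
      · rw [htn, hP]; exact_mod_cast ha
      · rw [htn, hQ]
        have hb' : (p.2:ℤ) + 1 ≤ (n₂:ℤ) := by exact_mod_cast hb
        nlinarith
    -- left inverse
    · intro k hk
      simp only [Finset.mem_filter, Finset.mem_range] at hk
      obtain ⟨hk2, hP, hQ⟩ := hk
      set a : ℤ := ((k:ℤ) - τ₁) % (d:ℤ) with hadef
      set x : ℤ := ((k:ℤ) - τ₂) % ((d:ℤ)^2) with hxdef
      have ha0 : 0 ≤ a := Int.emod_nonneg _ (by omega)
      have hx0 : 0 ≤ x := Int.emod_nonneg _ (by positivity)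
      have hx2 : x < (d:ℤ)^2 := Int.emod_lt_of_pos _ hd2
      simp only [Int.toNat_of_nonneg ha0, Int.toNat_of_nonneg (Int.ediv_nonneg hx0 hd0.le)]
      set r1 : ℤ := (a + τ₁ - τ₂) % (d:ℤ) with hr1def
      have hr1n : 0 ≤ r1 := Int.emod_nonneg _ (by omega)
      have hr1lt : r1 < d := Int.emod_lt_of_pos _ hd0
      -- r1 = x % d
      have hr1x : r1 = x % (d:ℤ) := by
        apply eq_of_lt_of_emod_eq (n := (d:ℤ)) ?_ hr1n hr1lt
          (Int.emod_nonneg _ (by omega)) (Int.emod_lt_of_pos _ hd0)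
        · have e1 : r1 ≡ a + τ₁ - τ₂ [ZMOD (d:ℤ)] := Int.emod_emod_of_dvd _ dvd_rfl
          have e2 : a ≡ (k:ℤ) - τ₁ [ZMOD (d:ℤ)] := Int.emod_emod_of_dvd _ dvd_rfl
          have e3 : r1 ≡ (k:ℤ) - τ₂ [ZMOD (d:ℤ)] := by
            calc r1 ≡ a + τ₁ - τ₂ [ZMOD (d:ℤ)] := e1
              _ ≡ ((k:ℤ) - τ₁) + τ₁ - τ₂ [ZMOD (d:ℤ)] := (e2.add_right τ₁).sub_right τ₂
              _ = (k:ℤ) - τ₂ := by ring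
          have e4 : (x % (d:ℤ)) ≡ (k:ℤ) - τ₂ [ZMOD (d:ℤ)] := by
            have e4a : x ≡ (k:ℤ) - τ₂ [ZMOD ((d:ℤ)^2)] := Int.emod_emod_of_dvd _ dvd_rfl
            have e4b : (x % (d:ℤ)) ≡ x [ZMOD (d:ℤ)] := Int.emod_emod_of_dvd _ dvd_rfl
            exact e4b.trans (e4a.of_dvd hdvd)
          exact e3.trans e4.symm
      have hsum : (d:ℤ) * (x / d) + r1 = x := by
        rw [hr1x]; exact Int.mul_ediv_add_emod x d
      -- K' = (τ₂ + x) % d² and τ₂ + x ≡ k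
      have : (τ₂ + (d:ℤ) * (x / d) + r1) % ((d:ℤ)^2) = (k:ℤ) := by
        have e5 : τ₂ + (d:ℤ) * (x / d) + r1 = τ₂ + x := by omega
        rw [e5]
        have e6a : x ≡ (k:ℤ) - τ₂ [ZMOD ((d:ℤ)^2)] := Int.emod_emod_of_dvd _ dvd_rfl
        have e6 : τ₂ + x ≡ τ₂ + ((k:ℤ) - τ₂) [ZMOD ((d:ℤ)^2)] := e6a.add_left τ₂
        have e7 : τ₂ + ((k:ℤ) - τ₂) = (k:ℤ) := by ring
        rw [e7] at e6
        rw [show ((τ₂ + x) % ((d:ℤ)^2)) = (k:ℤ) % ((d:ℤ)^2) from e6]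
        exact Int.emod_eq_of_lt (by positivity) (by exact_mod_cast hk2)
      rw [this]
      exact Int.toNat_natCast k
    -- right inverse
    · intro p hp
      simp only [Finset.mem_product, Finset.mem_range] at hp
      obtain ⟨ha, hb⟩ := hp
      have ha' : (p.1:ℤ) < d := by
        have h1' : (p.1:ℤ) < (n₁:ℤ) := by exact_mod_cast ha
        have : (n₁:ℤ) ≤ d := by exact_mod_cast h₁
        omega
      set r0 : ℤ := ((p.1:ℤ) + τ₁ - τ₂) % (d:ℤ) with hr0
      have hr0n : 0 ≤ r0 := Int.emod_nonneg _ (by omega)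
      have hr0lt : r0 < d := Int.emod_lt_of_pos _ hd0
      set K : ℤ := (τ₂ + (d:ℤ) * p.2 + r0) % ((d:ℤ)^2) with hK
      have hKn : 0 ≤ K := Int.emod_nonneg _ (by positivity)
      have htn : ((K.toNat : ℤ)) = K := Int.toNat_of_nonneg hKn
      have hKmod : K ≡ τ₂ + (d:ℤ) * p.2 + r0 [ZMOD ((d:ℤ)^2)] := Int.emod_emod_of_dvd _ dvd_rfl
      have hP : (K - τ₁) % (d:ℤ) = (p.1:ℤ) := by
        have hr0mod : r0 ≡ (p.1:ℤ) + τ₁ - τ₂ [ZMOD (d:ℤ)] := Int.emod_emod_of_dvd _ dvd_rfl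
        have h1 : K - τ₁ ≡ (τ₂ + (d:ℤ) * p.2 + ((p.1:ℤ) + τ₁ - τ₂)) - τ₁ [ZMOD (d:ℤ)] :=
          ((hKmod.of_dvd hdvd).trans
            ((Int.ModEq.refl (τ₂ + (d:ℤ) * p.2)).add hr0mod)).sub_right τ₁
        have h2 : (τ₂ + (d:ℤ) * p.2 + ((p.1:ℤ) + τ₁ - τ₂)) - τ₁ = (p.1:ℤ) + (d:ℤ) * p.2 := by ring
        have h3 : (K - τ₁) % (d:ℤ) = ((p.1:ℤ) + (d:ℤ) * p.2) % (d:ℤ) := by rw [← h2]; exact h1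
        rw [h3, Int.add_mul_emod_self_left, Int.emod_eq_of_lt (by positivity) ha']
      have hQ : (K - τ₂) % ((d:ℤ)^2) = (d:ℤ) * p.2 + r0 := by
        have h1 : K - τ₂ ≡ (d:ℤ) * p.2 + r0 [ZMOD ((d:ℤ)^2)] := by
          calc K - τ₂ ≡ τ₂ + (d:ℤ) * p.2 + r0 - τ₂ [ZMOD ((d:ℤ)^2)] := hKmod.sub_right τ₂
            _ = (d:ℤ) * p.2 + r0 := by ring
        have hb' : (p.2:ℤ) ≤ (d:ℤ) - 1 := by
          have h1' : (p.2:ℤ) < (n₂:ℤ) := by exact_mod_cast hb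
          have : (n₂:ℤ) ≤ d := by exact_mod_cast h₂
          omega
        have hub : (d:ℤ) * p.2 + r0 < (d:ℤ)^2 := by nlinarith
        rw [show ((K - τ₂) % ((d:ℤ)^2)) = ((d:ℤ) * p.2 + r0) % ((d:ℤ)^2) from h1,
          Int.emod_eq_of_lt (by positivity) hub]
      have hdiv : ((d:ℤ) * p.2 + r0) / d = (p.2:ℤ) := by
        rw [add_comm, Int.add_mul_ediv_left _ _ (by omega : (d:ℤ) ≠ 0),
          Int.ediv_eq_zero_of_lt hr0n hr0lt, zero_add]
      simp only [htn, hP, hQ, hdiv, Int.toNat_natCast]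
  rw [hcard, Finset.card_product, Finset.card_range, Finset.card_range]
  push_cast
  ring
end

section
/- For every integer d ≥ 1, all natural numbers n_2, n_3 with n_2, n_3 ≤ d, and all integers τ_2, τ_3: Σ_{k=0}^{d³−1} χ[((k−τ_2) mod d²) < d·n_2] · χ[((k−τ_3) mod d³) < d²·n_3] = d·n_2·n_3. In particular, this pairwise Hamming cross-correlation is independent of the shifts τ_2, τ_3. -/
lemma period_sum (q : ℕ) (hq : 0 < q) (τ : ℤ) (f : ℤ → ℤ) :
    ∑ k ∈ Finset.range q, f (((k:ℤ) - τ) % q) = ∑ k ∈ Finset.range q, f (k : ℤ) := by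
  have hq' : (0:ℤ) < q := by exact_mod_cast hq
  refine Finset.sum_nbij' (fun k => (((k:ℤ) - τ) % q).toNat)
    (fun k => (((k:ℤ) + τ) % q).toNat) ?_ ?_ ?_ ?_ ?_
  · intro a _
    simp only [Finset.mem_range]
    have := Int.emod_lt_of_pos ((a:ℤ) - τ) hq'
    omega
  · intro a _
    simp only [Finset.mem_range]
    have := Int.emod_lt_of_pos ((a:ℤ) + τ) hq'
    omega
  · intro a ha
    simp only [Finset.mem_range] at ha
    have h1 : (0:ℤ) ≤ ((a:ℤ) - τ) % q := Int.emod_nonneg _ (by omega)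
    have h2 : ((((a:ℤ) - τ) % q : ℤ).toNat : ℤ) = ((a:ℤ) - τ) % q := Int.toNat_of_nonneg h1
    have h3 : (((((a:ℤ) - τ) % q) + τ) % q) = (a:ℤ) % q := by
      rw [Int.emod_add_emod, sub_add_cancel]
    have ha' : (a:ℤ) % q = a := Int.emod_eq_of_lt (by positivity) (by exact_mod_cast ha)
    simp only [h2, h3, ha']
    omega
  · intro a ha
    simp only [Finset.mem_range] at ha
    have h1 : (0:ℤ) ≤ ((a:ℤ) + τ) % q := Int.emod_nonneg _ (by omega)
    have h2 : ((((a:ℤ) + τ) % q : ℤ).toNat : ℤ) = ((a:ℤ) + τ) % q := Int.toNat_of_nonneg h1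
    have h3 : (((((a:ℤ) + τ) % q) - τ) % q) = (a:ℤ) % q := by
      rw [Int.sub_emod, Int.emod_emod_of_dvd _ dvd_rfl, ← Int.sub_emod, add_sub_cancel_right]
    have ha' : (a:ℤ) % q = a := Int.emod_eq_of_lt (by positivity) (by exact_mod_cast ha)
    simp only [h2, h3, ha']
    omega
  · intro a ha
    simp only [Finset.mem_range] at ha
    have h1 : (0:ℤ) ≤ ((a:ℤ) - τ) % q := Int.emod_nonneg _ (by omega)
    rw [Int.toNat_of_nonneg h1]

lemma one_period (q : ℕ) (hq : 0 < q) (τ : ℤ) (m : ℕ) (hm : m ≤ q) :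
    ∑ k ∈ Finset.range q, (if ((k:ℤ) - τ) % q < m then (1:ℤ) else 0) = m := by
  rw [period_sum q hq τ (fun x => if x < m then 1 else 0)]
  have h1 : ∀ k ∈ Finset.range q, (if ((k:ℤ) : ℤ) < (m:ℤ) then (1:ℤ) else 0)
      = if k ∈ Finset.range m then 1 else 0 := by
    intro k _; simp [Finset.mem_range, Int.ofNat_lt]
  rw [Finset.sum_congr rfl h1, Finset.sum_ite_mem]
  have h2 : Finset.range q ∩ Finset.range m = Finset.range m := by
    ext x; simp only [Finset.mem_inter, Finset.mem_range]; omega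
  rw [h2]
  simp

lemma blocks (q : ℕ) (hq : 0 < q) (τ : ℤ) (m a : ℕ) (hm : m ≤ q) :
    ∑ k ∈ Finset.range (a*q), (if ((k:ℤ) - τ) % q < m then (1:ℤ) else 0) = a * m := by
  induction a with
  | zero => simp
  | succ a ih =>
    have h : (a+1)*q = a*q + q := by ring
    rw [h, Finset.sum_range_add, ih]
    have : ∀ i ∈ Finset.range q, (if (((a*q + i : ℕ):ℤ) - τ) % q < m then (1:ℤ) else 0)
        = if ((i:ℤ) - (τ - a*q)) % q < m then 1 else 0 := by
      intro i _
      congr 2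
      push_cast
      ring_nf
    rw [Finset.sum_congr rfl this, one_period q hq _ m hm]
    push_cast
    ring

/-- Pairwise case at scales `(d², d³)` underlying Proposition 1: the Hamming
cross-correlation over one period `d³` equals `d·n₂·n₃`, independently of the shifts. -/
theorem pairwise_correlation_dsq_dcube_shift_invariant
    (d : ℕ) (hd : 1 ≤ d) (n₂ n₃ : ℕ)
    (h₂ : n₂ ≤ d) (h₃ : n₃ ≤ d)
    (τ₂ τ₃ : ℤ) :
    ∑ k ∈ Finset.range (d ^ 3),
        (if ((k : ℤ) - τ₂) % ((d : ℤ) ^ 2) < (d : ℤ) * (n₂ : ℤ) then (1 : ℤ) else 0)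
          * (if ((k : ℤ) - τ₃) % ((d : ℤ) ^ 3) < (d : ℤ) ^ 2 * (n₃ : ℤ) then 1 else 0)
      = (d : ℤ) * n₂ * n₃ := by
  have hd3 : 0 < d ^ 3 := by positivity
  set f : ℤ → ℤ := fun x =>
    (if (x + τ₃ - τ₂) % ((d:ℤ)^2) < (d:ℤ) * n₂ then (1:ℤ) else 0)
      * (if x < (d:ℤ)^2 * n₃ then 1 else 0) with hf
  have hdvd : ((d:ℤ)^2) ∣ ((d:ℤ)^3) := pow_dvd_pow _ (by norm_num)
  have step1 : ∀ k ∈ Finset.range (d ^ 3),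
      (if ((k : ℤ) - τ₂) % ((d : ℤ) ^ 2) < (d : ℤ) * (n₂ : ℤ) then (1 : ℤ) else 0)
        * (if ((k : ℤ) - τ₃) % ((d : ℤ) ^ 3) < (d : ℤ) ^ 2 * (n₃ : ℤ) then 1 else 0)
      = f ((((k:ℕ):ℤ) - τ₃) % ((d^3 : ℕ) : ℤ)) := by
    intro k _
    rw [hf]
    simp only
    have hc : ((d^3 : ℕ) : ℤ) = (d:ℤ)^3 := by push_cast; ring
    rw [hc]
    congr 2
    have e1 : ((k:ℤ) - τ₃) % (d:ℤ)^3 + τ₃ - τ₂ = ((k:ℤ) - τ₃) % (d:ℤ)^3 + (τ₃ - τ₂) := by ring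
    rw [e1, ← Int.emod_add_emod, Int.emod_emod_of_dvd _ hdvd, Int.emod_add_emod]
    congr 1
    ring
  rw [Finset.sum_congr rfl step1, period_sum (d^3) hd3 τ₃ f]
  have hsub : Finset.range (n₃ * d^2) ⊆ Finset.range (d^3) := by
    apply Finset.range_subset_range.mpr
    calc n₃ * d^2 ≤ d * d^2 := by exact Nat.mul_le_mul_right _ h₃
    _ = d^3 := by ring
  rw [← Finset.sum_subset hsub]
  · have term_eq : ∀ k ∈ Finset.range (n₃ * d^2),
        f (k:ℤ) = if ((k:ℤ) - (τ₂ - τ₃)) % ((d^2 : ℕ):ℤ) < ((d*n₂ : ℕ):ℤ) then 1 else 0 := by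
      intro k hk
      simp only [Finset.mem_range] at hk
      rw [hf]
      simp only
      have h2 : (k:ℤ) < (d:ℤ)^2 * n₃ := by
        have : (k:ℤ) < ((n₃ * d^2 : ℕ) : ℤ) := by exact_mod_cast hk
        push_cast at this
        linarith [this]
      rw [if_pos h2, mul_one]
      have e1 : (k:ℤ) + τ₃ - τ₂ = (k:ℤ) - (τ₂ - τ₃) := by ring
      rw [e1]
      congr 2 <;> push_cast <;> ring_nf
    rw [Finset.sum_congr rfl term_eq,
      blocks (d^2) (by positivity) (τ₂ - τ₃) (d*n₂) n₃ (by nlinarith)]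
    push_cast
    ring
  · intro k _ hk
    simp only [Finset.mem_range, not_lt] at hk
    rw [hf]
    simp only
    have h2 : ¬ ((k:ℤ) < (d:ℤ)^2 * n₃) := by
      push_neg
      have : ((n₃ * d^2 : ℕ) : ℤ) ≤ (k:ℤ) := by exact_mod_cast hk
      push_cast at this
      linarith
    rw [if_neg h2, mul_zero]
end

section
/- Let T > 0 be a real number, c ≥ 1 an integer, and let a_1, …, a_m ∈ ℝ be such that each interval [a_j, a_j + T) is contained in [0, c·T) and the intervals [a_1, a_1+T), …, [a_m, a_m+T) are pairwise disjoint. Define s : ℝ → ℝ by s(t) = 1 if (t mod (c·T)) ∈ ⋃_{j=1}^{m} [a_j, a_j + T) and s(t) = 0 otherwise. Then: (i) ∫_{0}^{c·T} s(t) dt = m·T, so the duty factor of s is f = m/c; and (ii) for every t₀ ∈ ℝ, Σ_{k=0}^{c−1} s(t₀ − k·T) = m = c·f. Equivalently, (1/c)·Σ_{k=0}^{c−1} s(t₀ − k·T) = (1/(c·T))·∫_{0}^{c·T} s(t) dt for every t₀. -/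
open scoped Classical


open MeasureTheory Set
open scoped ENNReal

private lemma floor_eq_of_sub_mem {D z : ℝ} (hD : 0 < D) {n : ℤ}
    (h0 : 0 ≤ z - n * D) (h1 : z - n * D < D) : ⌊z / D⌋ = n := by
  rw [Int.floor_eq_iff]
  constructor
  · rw [le_div_iff₀ hD]; linarith
  · rw [div_lt_iff₀ hD]; push_cast; linarith

private lemma red_mem_iff (T : ℝ) (hT : 0 < T) (c : ℕ) (hc : 1 ≤ c)
    (b t₀ : ℝ) (hsub : Set.Ico b (b + T) ⊆ Set.Ico (0:ℝ) ((c:ℝ)*T))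
    (k : ℕ) (hk : k < c) :
    ((t₀ - (k:ℝ)*T) - ((c:ℝ)*T) * (⌊(t₀ - (k:ℝ)*T) / ((c:ℝ)*T)⌋ : ℤ) ∈ Set.Ico b (b + T))
      ↔ (k : ℤ) = ⌊(t₀ - b)/T⌋ % c := by
  have hcR : (0:ℝ) < c := by exact_mod_cast Nat.pos_of_ne_zero (by omega)
  have hD : 0 < (c:ℝ)*T := mul_pos hcR hT
  constructor
  · intro h
    set n := ⌊(t₀ - (k:ℝ)*T)/((c:ℝ)*T)⌋ with hn
    obtain ⟨h1, h2⟩ := h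
    have hq : ⌊(t₀ - b)/T⌋ = (k:ℤ) + n * c := by
      apply floor_eq_of_sub_mem hT
      · push_cast; nlinarith
      · push_cast; nlinarith
    rw [hq, Int.add_mul_emod_self_right, Int.emod_eq_of_lt (Int.natCast_nonneg k)
      (by exact_mod_cast hk)]
  · intro h
    obtain ⟨q, hqdef⟩ : ∃ q : ℤ, ⌊(t₀ - b)/T⌋ = q := ⟨_, rfl⟩
    rw [hqdef] at h
    set n := q / (c:ℤ) with hndef
    have hq : (k:ℤ) + n * (c:ℤ) = q := by
      rw [hndef]
      have h2 := Int.mul_ediv_add_emod q (c:ℤ)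
      linear_combination h2 + h
    have hf0 : 0 ≤ (t₀ - b) - (q:ℝ)*T := by
      have := Int.sub_floor_div_mul_nonneg (t₀ - b) hT
      rw [hqdef] at this; linarith
    have hf1 : (t₀ - b) - (q:ℝ)*T < T := by
      have := Int.sub_floor_div_mul_lt (t₀ - b) hT
      rw [hqdef] at this; linarith
    have hqR : (k:ℝ) + (n:ℝ) * (c:ℝ) = (q:ℝ) := by exact_mod_cast hq
    have hmem : (t₀ - (k:ℝ)*T) - ((c:ℝ)*T) * (n:ℝ) ∈ Set.Ico b (b + T) := by
      constructor
      · nlinarith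
      · nlinarith
    have hfl : ⌊(t₀ - (k:ℝ)*T)/((c:ℝ)*T)⌋ = n := by
      obtain ⟨hg0, hg1⟩ := hsub hmem
      apply floor_eq_of_sub_mem hD
      · linarith
      · linarith
    rw [hfl]
    exact hmem

/-- For a protocol signal `s` of period `c·T` whose support in one period is a disjoint
union of `m` semi-open intervals of length `T`: (i) the integral of `s` over one period
is `m·T`, so the duty factor is `f = m/c`; (ii) for every `t₀`, the sum of `s` over the
`c` evenly spaced sample times `t₀, t₀−T, …, t₀−(c−1)T` equals `m = c·f`; equivalently,
the discrete average of `s` over the sample times equals its duty factor. -/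
theorem protocol_signal_discrete_average_eq_duty_factor
    (T : ℝ) (hT : 0 < T) (c : ℕ) (hc : 1 ≤ c) (m : ℕ) (a : Fin m → ℝ)
    (hsub : ∀ j, Set.Ico (a j) (a j + T) ⊆ Set.Ico (0 : ℝ) ((c : ℝ) * T))
    (hdisj : ∀ j j', j ≠ j' →
      Disjoint (Set.Ico (a j) (a j + T)) (Set.Ico (a j') (a j' + T)))
    (s : ℝ → ℝ)
    (hs : ∀ t : ℝ,
      s t = if (t - ((c : ℝ) * T) * (⌊t / ((c : ℝ) * T)⌋ : ℤ))
              ∈ ⋃ j : Fin m, Set.Ico (a j) (a j + T) then 1 else 0) :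
    (∫ t in (0 : ℝ)..((c : ℝ) * T), s t = (m : ℝ) * T) ∧
    (∀ t₀ : ℝ, ∑ k ∈ Finset.range c, s (t₀ - (k : ℝ) * T) = (m : ℝ)) ∧
    (∀ t₀ : ℝ, (1 / (c : ℝ)) * ∑ k ∈ Finset.range c, s (t₀ - (k : ℝ) * T)
      = (1 / ((c : ℝ) * T)) * ∫ t in (0 : ℝ)..((c : ℝ) * T), s t) := by
  have hcR : (0:ℝ) < c := by exact_mod_cast Nat.pos_of_ne_zero (by omega)
  have hD : 0 < (c:ℝ)*T := mul_pos hcR hT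
  -- Part (i): the integral over one period
  have hUmeas : MeasurableSet (⋃ j : Fin m, Set.Ico (a j) (a j + T)) :=
    MeasurableSet.iUnion fun j => measurableSet_Ico
  have hUsub : (⋃ j : Fin m, Set.Ico (a j) (a j + T)) ⊆ Set.Ico (0:ℝ) ((c:ℝ)*T) :=
    Set.iUnion_subset hsub
  have hvolU : volume (⋃ j : Fin m, Set.Ico (a j) (a j + T))
      = (m : ℝ≥0∞) * ENNReal.ofReal T := by
    rw [measure_iUnion (fun j j' h => hdisj j j' h) (fun j => measurableSet_Ico)]
    simp [Real.volume_Ico, tsum_fintype]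
  have part1 : ∫ t in (0 : ℝ)..((c : ℝ) * T), s t = (m : ℝ) * T := by
    rw [intervalIntegral.integral_of_le hD.le]
    have hne : ∀ᵐ t : ℝ, t ≠ (c:ℝ)*T := by
      have hset : {t : ℝ | ¬ t ≠ (c:ℝ)*T} = {(c:ℝ)*T} := by ext t; simp
      rw [ae_iff, hset]; exact measure_singleton _
    have hae : (fun t => s t) =ᵐ[volume.restrict (Set.Ioc 0 ((c:ℝ)*T))]
        (⋃ j : Fin m, Set.Ico (a j) (a j + T)).indicator (fun _ => (1:ℝ)) := by
      refine (ae_restrict_iff' measurableSet_Ioc).mpr ?_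
      filter_upwards [hne] with t htne htIoc
      have hfl : ⌊t/((c:ℝ)*T)⌋ = 0 := by
        apply floor_eq_of_sub_mem hD
        · push_cast; linarith [htIoc.1]
        · push_cast; exact lt_of_le_of_ne (by linarith [htIoc.2]) (by simpa using htne)
      rw [hs t, hfl]
      push_cast
      rw [mul_zero, sub_zero]
      simp [Set.indicator_apply]
    rw [integral_congr_ae hae, setIntegral_indicator hUmeas, setIntegral_const]
    have hseteq : Set.Ioc (0:ℝ) ((c:ℝ)*T) ∩ (⋃ j : Fin m, Set.Ico (a j) (a j + T))
        = (⋃ j : Fin m, Set.Ico (a j) (a j + T)) \ {0} := by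
      ext x
      simp only [Set.mem_inter_iff, Set.mem_Ioc, Set.mem_diff, Set.mem_singleton_iff]
      constructor
      · rintro ⟨⟨h1, h2⟩, h3⟩; exact ⟨h3, ne_of_gt h1⟩
      · rintro ⟨h3, h4⟩
        obtain ⟨h5, h6⟩ := hUsub h3
        exact ⟨⟨lt_of_le_of_ne h5 (Ne.symm h4), h6.le⟩, h3⟩
    rw [hseteq, measureReal_def, measure_diff_null (measure_singleton 0), hvolU]
    rw [ENNReal.toReal_mul, ENNReal.toReal_ofReal hT.le]
    simp
  -- Part (ii): the discrete average
  have part2 : ∀ t₀ : ℝ, ∑ k ∈ Finset.range c, s (t₀ - (k : ℝ) * T) = (m : ℝ) := by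
    intro t₀
    set v : Fin m → ℤ := fun j => ⌊(t₀ - a j)/T⌋ % c with hv
    have hv0 : ∀ j, 0 ≤ v j := fun j => Int.emod_nonneg _ (by exact_mod_cast (by omega : c ≠ 0))
    have hvlt : ∀ j, v j < c := fun j => Int.emod_lt_of_pos _ (by exact_mod_cast hc)
    have hmemiff : ∀ (j : Fin m) (k : ℕ), k < c →
        (((t₀ - (k:ℝ)*T) - ((c:ℝ)*T) * (⌊(t₀ - (k:ℝ)*T) / ((c:ℝ)*T)⌋ : ℤ)
          ∈ Set.Ico (a j) (a j + T)) ↔ (k : ℤ) = v j) :=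
      fun j k hk => red_mem_iff T hT c hc (a j) t₀ (hsub j) k hk
    have hvinj : Function.Injective v := by
      intro j j' hjj
      by_contra hne
      set k₀ := (v j).toNat with hk₀
      have hk₀c : k₀ < c := by have := hvlt j; have := hv0 j; omega
      have hkeq : ((k₀:ℕ) : ℤ) = v j := Int.toNat_of_nonneg (hv0 j)
      have h1 := (hmemiff j k₀ hk₀c).mpr hkeq
      have h2 := (hmemiff j' k₀ hk₀c).mpr (hkeq.trans hjj)
      exact Set.disjoint_left.mp (hdisj j j' hne) h1 h2
    have step : ∀ k ∈ Finset.range c,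
        s (t₀ - (k:ℝ)*T) = ∑ j : Fin m, if (k:ℤ) = v j then (1:ℝ) else 0 := by
      intro k hk
      have hiff : ((t₀ - (k:ℝ)*T) - ((c:ℝ)*T) * (⌊(t₀ - (k:ℝ)*T) / ((c:ℝ)*T)⌋ : ℤ)
          ∈ ⋃ j : Fin m, Set.Ico (a j) (a j + T)) ↔ ∃ j, (k:ℤ) = v j := by
        rw [Set.mem_iUnion]
        exact exists_congr fun j => hmemiff j k (Finset.mem_range.mp hk)
      rw [hs]
      by_cases hU : ∃ j, (k:ℤ) = v j
      · obtain ⟨j₀, hj₀⟩ := hU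
        rw [if_pos (hiff.mpr ⟨j₀, hj₀⟩),
          Finset.sum_eq_single_of_mem j₀ (Finset.mem_univ j₀)
            (fun b _ hb => if_neg fun hkb => hb (hvinj (hkb.symm.trans hj₀))),
          if_pos hj₀]
      · rw [if_neg (fun h => hU (hiff.mp h))]
        exact (Finset.sum_eq_zero fun j _ => if_neg fun h => hU ⟨j, h⟩).symm
    rw [Finset.sum_congr rfl step, Finset.sum_comm]
    have hone : ∀ j : Fin m, ∑ k ∈ Finset.range c, (if (k:ℤ) = v j then (1:ℝ) else 0) = 1 := by
      intro j
      have hkeq : ∀ k : ℕ, ((k:ℤ) = v j) ↔ k = (v j).toNat := by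
        intro k; have := hv0 j; omega
      simp only [hkeq]
      rw [Finset.sum_ite_eq' (Finset.range c) ((v j).toNat) (fun _ => (1:ℝ)),
        if_pos (Finset.mem_range.mpr (by have := hvlt j; have := hv0 j; omega))]
    rw [Finset.sum_congr rfl fun j _ => hone j]
    simp
  refine ⟨part1, part2, fun t₀ => ?_⟩
  rw [part1, part2 t₀]
  field_simp
end

section
/- Let s_1, s_2, s_3 be binary sequences of common period P such that for every nonempty subset A ⊆ {1,2,3} the generalized Hamming cross-correlation of (s_j)_{j∈A} is independent of the shifts. Fix shifts τ_1, τ_2, τ_3 ∈ ZMod P, and suppose τ_1', τ_3' ∈ ZMod P are such that for every k ∈ ZMod P with s_2(k−τ_2) = 0 one has s_1(k−τ_1') + s_3(k−τ_3') = s_1(k−τ_1) + s_3(k−τ_3) (i.e., the channel activity signal computed with shifts (τ_1', τ_3') coincides with the true channel activity signal). Then for every k ∈ ZMod P with s_2(k−τ_2) = 0 and s_1(k−τ_1) + s_3(k−τ_3) = 1, one has s_1(k−τ_1') = s_1(k−τ_1) and s_3(k−τ_3') = s_3(k−τ_3). In words: the sender of every successfully received (non-collided) packet is correctly identified by the sliding-window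 algorithm, regardless of the delay offsets. -/
/-- **Identifiability.** Let `s 0, s 1, s 2` be the (binary, common period `P`) protocol
sequences of three consecutive nodes, whose generalized Hamming cross-correlations over
every nonempty subset are independent of the shifts. If candidate shifts `τ₁', τ₃'`
reproduce the true channel activity signal observed by the middle node (i.e., at every
slot where the middle node is silent the number of arriving packets matches), then at
every slot with exactly one successfully received packet, the sender is identified
correctly. -/
theorem identifiability_of_senders (P : ℕ) [NeZero P]
    (s : Fin 3 → ZMod P → ℝ)
    (hbin : ∀ j k, s j k = 0 ∨ s j k = 1)
    (hSI : ∀ A : Finset (Fin 3), A.Nonempty →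
      ∀ τ τ' : Fin 3 → ZMod P,
        ∑ k : ZMod P, ∏ j ∈ A, s j (k - τ j)
          = ∑ k : ZMod P, ∏ j ∈ A, s j (k - τ' j))
    (τ₁ τ₂ τ₃ τ₁' τ₃' : ZMod P)
    (hmatch : ∀ k : ZMod P, s 1 (k - τ₂) = 0 →
      s 0 (k - τ₁') + s 2 (k - τ₃') = s 0 (k - τ₁) + s 2 (k - τ₃)) :
    ∀ k : ZMod P, s 1 (k - τ₂) = 0 →
      s 0 (k - τ₁) + s 2 (k - τ₃) = 1 →
        s 0 (k - τ₁') = s 0 (k - τ₁) ∧ s 2 (k - τ₃') = s 2 (k - τ₃) := by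
  -- pair correlations {0,2} are shift-independent
  have hpair : ∀ x y : ZMod P,
      ∑ k : ZMod P, s 0 (k - x) * s 2 (k - y)
        = ∑ k : ZMod P, s 0 (k - τ₁) * s 2 (k - τ₃) := by
    intro x y
    have h := hSI {0, 2} ⟨0, by decide⟩ ![x, 0, y] ![τ₁, 0, τ₃]
    simpa [Finset.prod_pair (show (0 : Fin 3) ≠ 2 by decide)] using h
  -- triple correlations are shift-independent (with middle shift τ₂ fixed)
  have htrip : ∀ x y : ZMod P,
      ∑ k : ZMod P, s 0 (k - x) * s 1 (k - τ₂) * s 2 (k - y)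
        = ∑ k : ZMod P, s 0 (k - τ₁) * s 1 (k - τ₂) * s 2 (k - τ₃) := by
    intro x y
    have h := hSI Finset.univ Finset.univ_nonempty ![x, τ₂, y] ![τ₁, τ₂, τ₃]
    simpa [Fin.prod_univ_three, mul_assoc] using h
  -- the key cross sum vanishes
  have key : ∑ k : ZMod P,
      (1 - s 1 (k - τ₂)) *
        ((s 0 (k - τ₁') - s 0 (k - τ₁)) * (s 2 (k - τ₃') - s 2 (k - τ₃))) = 0 := by
    have expand : ∀ k : ZMod P,
        (1 - s 1 (k - τ₂)) *
          ((s 0 (k - τ₁') - s 0 (k - τ₁)) * (s 2 (k - τ₃') - s 2 (k - τ₃)))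
        = (s 0 (k - τ₁') * s 2 (k - τ₃') - s 0 (k - τ₁') * s 2 (k - τ₃)
            - s 0 (k - τ₁) * s 2 (k - τ₃') + s 0 (k - τ₁) * s 2 (k - τ₃))
          - (s 0 (k - τ₁') * s 1 (k - τ₂) * s 2 (k - τ₃')
              - s 0 (k - τ₁') * s 1 (k - τ₂) * s 2 (k - τ₃)
              - s 0 (k - τ₁) * s 1 (k - τ₂) * s 2 (k - τ₃')
              + s 0 (k - τ₁) * s 1 (k - τ₂) * s 2 (k - τ₃)) := by
      intro k; ring
    rw [Finset.sum_congr rfl fun k _ => expand k]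
    simp only [Finset.sum_sub_distrib, Finset.sum_add_distrib]
    have h1 := hpair τ₁' τ₃'
    have h2 := hpair τ₁' τ₃
    have h3 := hpair τ₁ τ₃'
    have t1 := htrip τ₁' τ₃'
    have t2 := htrip τ₁' τ₃
    have t3 := htrip τ₁ τ₃'
    linarith
  -- hence the sum of squares vanishes
  have key2 : ∑ k : ZMod P,
      (1 - s 1 (k - τ₂)) * (s 0 (k - τ₁') - s 0 (k - τ₁)) ^ 2 = 0 := by
    have ptwise : ∀ k : ZMod P,
        (1 - s 1 (k - τ₂)) * (s 0 (k - τ₁') - s 0 (k - τ₁)) ^ 2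
        = -((1 - s 1 (k - τ₂)) *
            ((s 0 (k - τ₁') - s 0 (k - τ₁)) * (s 2 (k - τ₃') - s 2 (k - τ₃)))) := by
      intro k
      rcases hbin 1 (k - τ₂) with h | h
      · have hm := hmatch k h
        rw [h]
        linear_combination (s 0 (k - τ₁') - s 0 (k - τ₁)) * hm
      · rw [h]; ring
    rw [Finset.sum_congr rfl fun k _ => ptwise k, Finset.sum_neg_distrib, key, neg_zero]
  -- each summand is nonnegative, so each vanishes
  have nonneg : ∀ k : ZMod P, k ∈ (Finset.univ : Finset (ZMod P)) →
      0 ≤ (1 - s 1 (k - τ₂)) * (s 0 (k - τ₁') - s 0 (k - τ₁)) ^ 2 := by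
    intro k _
    have : 0 ≤ 1 - s 1 (k - τ₂) := by rcases hbin 1 (k - τ₂) with h | h <;> rw [h] <;> norm_num
    positivity
  have allzero := (Finset.sum_eq_zero_iff_of_nonneg nonneg).mp key2
  intro k hB hone
  have hk := allzero k (Finset.mem_univ k)
  rw [hB] at hk
  have hsq : (s 0 (k - τ₁') - s 0 (k - τ₁)) ^ 2 = 0 := by linarith [sq_nonneg (s 0 (k - τ₁') - s 0 (k - τ₁))]
  have hA : s 0 (k - τ₁') = s 0 (k - τ₁) := by
    have := pow_eq_zero_iff (n := 2) (by norm_num) |>.mp hsq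
    linarith [sub_eq_zero.mp this]
  have hm := hmatch k hB
  exact ⟨hA, by linarith⟩
end

section
/- Let s_1, s_2, s_3 be binary sequences of common period P with duty factors f_1, f_2, f_3, such that for every nonempty subset A ⊆ {1,2,3} the generalized Hamming cross-correlation of (s_j)_{j∈A} is independent of the shifts. Then for all shifts τ_1, τ_2, τ_3 ∈ ZMod P: Σ_{k ∈ ZMod P} s_1(k−τ_1)·s_3(k−τ_3)·(1 − s_2(k−τ_2)) = P·f_1·f_3·(1 − f_2). In words: the number of collision slots ('*' symbols) observed per period by the middle node is P·(1−f_2)·f_1·f_3, independently of the delay offsets. -/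
/-- The number of collision slots (`*` symbols) observed per period by the middle node
of three consecutive nodes with shift-invariant binary protocol sequences is
`P·f₁·f₃·(1−f₂)`, independently of the delay offsets. -/
theorem collision_count_shift_invariant (P : ℕ) [NeZero P]
    (s : Fin 3 → ZMod P → ℝ) (f₁ f₂ f₃ : ℝ)
    (hbin : ∀ j k, s j k = 0 ∨ s j k = 1)
    (hf₁ : f₁ = (1 / (P : ℝ)) * ∑ k : ZMod P, s 0 k)
    (hf₂ : f₂ = (1 / (P : ℝ)) * ∑ k : ZMod P, s 1 k)
    (hf₃ : f₃ = (1 / (P : ℝ)) * ∑ k : ZMod P, s 2 k)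
    (hSI : ∀ A : Finset (Fin 3), A.Nonempty →
      ∀ τ τ' : Fin 3 → ZMod P,
        ∑ k : ZMod P, ∏ j ∈ A, s j (k - τ j)
          = ∑ k : ZMod P, ∏ j ∈ A, s j (k - τ' j)) :
    ∀ τ₁ τ₂ τ₃ : ZMod P,
      ∑ k : ZMod P, s 0 (k - τ₁) * s 2 (k - τ₃) * (1 - s 1 (k - τ₂))
        = (P : ℝ) * f₁ * f₃ * (1 - f₂) := by
  intro τ₁ τ₂ τ₃
  have hP : (P : ℝ) ≠ 0 := Nat.cast_ne_zero.mpr (NeZero.ne P)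
  have hcard : Fintype.card (ZMod P) = P := ZMod.card P
  have hshift : ∀ (g : ZMod P → ℝ) (c : ZMod P),
      (∑ τ : ZMod P, g (c - τ)) = ∑ x : ZMod P, g x := fun g c =>
    Fintype.sum_equiv (Equiv.subLeft c) _ _ (fun x => rfl)
  have hshift' : ∀ (g : ZMod P → ℝ) (c : ZMod P),
      (∑ k : ZMod P, g (k - c)) = ∑ x : ZMod P, g x := fun g c =>
    Fintype.sum_equiv (Equiv.subRight c) _ _ (fun x => rfl)
  set S0 := ∑ k : ZMod P, s 0 k with hS0
  set S1 := ∑ k : ZMod P, s 1 k with hS1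
  set S2 := ∑ k : ZMod P, s 2 k with hS2
  -- pair correlation
  have hpair : ∀ a b : ZMod P,
      (∑ k : ZMod P, s 0 (k - a) * s 2 (k - b)) = S0 * S2 / P := by
    intro a b
    have hconst : ∀ τ : ZMod P,
        (∑ k : ZMod P, s 0 (k - τ) * s 2 (k - b))
          = ∑ k : ZMod P, s 0 (k - a) * s 2 (k - b) := by
      intro τ
      have h02 : (0 : Fin 3) ≠ 2 := by decide
      have := hSI {0, 2} ⟨0, by decide⟩ ![τ, 0, b] ![a, 0, b]
      simpa [Finset.prod_pair h02] using this
    have hmul : (P : ℝ) * (∑ k : ZMod P, s 0 (k - a) * s 2 (k - b)) = S0 * S2 := by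
      calc (P : ℝ) * (∑ k : ZMod P, s 0 (k - a) * s 2 (k - b))
          = ∑ τ : ZMod P, ∑ k : ZMod P, s 0 (k - τ) * s 2 (k - b) := by
            rw [Finset.sum_congr rfl fun τ _ => hconst τ, Finset.sum_const]
            simp [hcard, nsmul_eq_mul]
        _ = ∑ k : ZMod P, ∑ τ : ZMod P, s 0 (k - τ) * s 2 (k - b) := Finset.sum_comm
        _ = ∑ k : ZMod P, S0 * s 2 (k - b) := by
            refine Finset.sum_congr rfl fun k _ => ?_
            rw [← Finset.sum_mul, hshift (s 0) k]
        _ = S0 * S2 := by rw [← Finset.mul_sum, hshift' (s 2) b]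
    field_simp
    linarith [hmul]
  -- triple correlation
  have htriple : ∀ a b c : ZMod P,
      (∑ k : ZMod P, s 0 (k - a) * s 1 (k - b) * s 2 (k - c))
        = S0 * S1 * S2 / ((P : ℝ) * P) := by
    intro a b c
    have hconst : ∀ τ₀ τ₁' : ZMod P,
        (∑ k : ZMod P, s 0 (k - τ₀) * s 1 (k - τ₁') * s 2 (k - c))
          = ∑ k : ZMod P, s 0 (k - a) * s 1 (k - b) * s 2 (k - c) := by
      intro τ₀ τ₁'
      have := hSI Finset.univ ⟨0, by decide⟩ ![τ₀, τ₁', c] ![a, b, c]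
      simpa [Fin.prod_univ_three, mul_assoc] using this
    have hmul : (P : ℝ) * ((P : ℝ) *
        (∑ k : ZMod P, s 0 (k - a) * s 1 (k - b) * s 2 (k - c))) = S0 * S1 * S2 := by
      calc (P : ℝ) * ((P : ℝ) * (∑ k : ZMod P, s 0 (k - a) * s 1 (k - b) * s 2 (k - c)))
          = ∑ τ₀ : ZMod P, ∑ τ' : ZMod P,
              ∑ k : ZMod P, s 0 (k - τ₀) * s 1 (k - τ') * s 2 (k - c) := by
            rw [Finset.sum_congr rfl fun τ₀ _ =>
              Finset.sum_congr rfl fun τ' _ => hconst τ₀ τ']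
            simp [Finset.sum_const, hcard, nsmul_eq_mul, mul_assoc]
        _ = ∑ τ₀ : ZMod P, ∑ k : ZMod P,
              ∑ τ' : ZMod P, s 0 (k - τ₀) * s 1 (k - τ') * s 2 (k - c) :=
            Finset.sum_congr rfl fun _ _ => Finset.sum_comm
        _ = ∑ τ₀ : ZMod P, ∑ k : ZMod P, s 0 (k - τ₀) * S1 * s 2 (k - c) := by
            refine Finset.sum_congr rfl fun τ₀ _ => Finset.sum_congr rfl fun k _ => ?_
            have : s 0 (k - τ₀) * (∑ τ' : ZMod P, s 1 (k - τ')) * s 2 (k - c)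
                = ∑ τ' : ZMod P, s 0 (k - τ₀) * s 1 (k - τ') * s 2 (k - c) := by
              rw [Finset.mul_sum, Finset.sum_mul]
            rw [← this, hshift (s 1) k]
        _ = ∑ k : ZMod P, ∑ τ₀ : ZMod P, s 0 (k - τ₀) * S1 * s 2 (k - c) :=
            Finset.sum_comm
        _ = ∑ k : ZMod P, S0 * S1 * s 2 (k - c) := by
            refine Finset.sum_congr rfl fun k _ => ?_
            rw [← Finset.sum_mul, ← Finset.sum_mul, hshift (s 0) k]
        _ = S0 * S1 * S2 := by rw [← Finset.mul_sum, hshift' (s 2) c]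
    have h2 : (P : ℝ) * P ≠ 0 := mul_ne_zero hP hP
    field_simp
    linarith [hmul]
  have hsplit : (∑ k : ZMod P, s 0 (k - τ₁) * s 2 (k - τ₃) * (1 - s 1 (k - τ₂)))
      = (∑ k : ZMod P, s 0 (k - τ₁) * s 2 (k - τ₃))
        - ∑ k : ZMod P, s 0 (k - τ₁) * s 1 (k - τ₂) * s 2 (k - τ₃) := by
    rw [← Finset.sum_sub_distrib]
    exact Finset.sum_congr rfl fun k _ => by ring
  rw [hsplit, hpair τ₁ τ₃, htriple τ₁ τ₂ τ₃, hf₁, hf₂, hf₃]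
  field_simp
end

section
/- For all real numbers f_1, f_2, f_3, f_4 ∈ [0, 1], min{ f_1(1−f_2)(1−f_3), f_2(1−f_3)(1−f_4), f_3(1−f_4), f_4(1−f_3)(1−f_2), f_3(1−f_2)(1−f_1), f_2(1−f_1) } ≤ 4/27; moreover, when f_1 = f_2 = f_3 = f_4 = 1/3 this minimum equals 4/27. Consequently, the maximal symmetric rate R_1 = R_2 in the capacity region of the four-node two-way tandem collision network is 4/27. -/
set_option maxHeartbeats 1000000 in
lemma core (b c : ℝ) (b0 : 0 ≤ b) (b1 : b ≤ 1) (c0 : 0 ≤ c) (c1 : c ≤ 1)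
    (hpt : 4/27 < (1-b)*(1-c))
    (h3 : b * c * ((1-b)*(1-c) - 4/27)^2 > (4/27)^2 * ((1-b)*(1-c))) : False := by
  set s : ℝ := Real.sqrt ((1-b)*(1-c)) with hs
  have hp0 : (0:ℝ) ≤ (1-b)*(1-c) := mul_nonneg (by linarith) (by linarith)
  have hs0 : 0 ≤ s := Real.sqrt_nonneg _
  have hs2 : s ^ 2 = (1-b)*(1-c) := Real.sq_sqrt hp0
  have hp1 : (1-b)*(1-c) ≤ 1 := by nlinarith
  have hs1 : s ≤ 1 := by nlinarith [sq_nonneg (s - 1)]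
  have hsum : (1-b) + (1-c) ≥ 2 * s := by nlinarith [sq_nonneg ((1-b) - (1-c))]
  have hprod : b * c ≤ (1 - s)^2 := by nlinarith
  have hcubic : s^2 * (1 - s) ≤ 4/27 := by
    nlinarith [mul_nonneg (sq_nonneg (3*s - 2)) hs0, sq_nonneg (3*s - 2)]
  have hkey : (1 - s) * ((1-b)*(1-c) - 4/27) ≤ 4/27 * s := by nlinarith
  have hnn : 0 ≤ (1 - s) * ((1-b)*(1-c) - 4/27) :=
    mul_nonneg (by linarith) (by linarith)
  have hsq : ((1 - s) * ((1-b)*(1-c) - 4/27))^2 ≤ (4/27 * s)^2 := by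
    nlinarith
  nlinarith [sq_nonneg ((1-b)*(1-c) - 4/27), mul_nonneg b0 c0]

set_option maxHeartbeats 1000000 in
lemma aux (f₁ f₂ f₃ f₄ : ℝ) (a0 : 0 ≤ f₁) (a1 : f₁ ≤ 1) (b0 : 0 ≤ f₂) (b1 : f₂ ≤ 1)
    (c0 : 0 ≤ f₃) (c1 : f₃ ≤ 1) (d0 : 0 ≤ f₄) (d1 : f₄ ≤ 1)
    (g1 : 4/27 < f₁ * (1 - f₂) * (1 - f₃)) (g2 : 4/27 < f₂ * (1 - f₃) * (1 - f₄))
    (g4 : 4/27 < f₄ * (1 - f₃) * (1 - f₂)) (g5 : 4/27 < f₃ * (1 - f₂) * (1 - f₁)) :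
    False := by
  have hu0 : (0:ℝ) ≤ 1 - f₂ := by linarith
  have hv0 : (0:ℝ) ≤ 1 - f₃ := by linarith
  have hpt : 4/27 < (1-f₂)*(1-f₃) := by
    nlinarith [mul_nonneg (mul_nonneg (by linarith : (0:ℝ) ≤ 1 - f₁) hu0) hv0]
  have hppos : (0:ℝ) < (1-f₂)*(1-f₃) := by linarith
  have h1 : f₃*(1-f₂)*((1-f₂)*(1-f₃) - 4/27) > 4/27 * ((1-f₂)*(1-f₃)) := by
    nlinarith [mul_nonneg (mul_nonneg c0 hu0) (by linarith : (0:ℝ) ≤ f₁*(1-f₂)*(1-f₃) - 4/27),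
      mul_lt_mul_of_pos_left g5 hppos]
  have h2 : f₂*(1-f₃)*((1-f₂)*(1-f₃) - 4/27) > 4/27 * ((1-f₂)*(1-f₃)) := by
    nlinarith [mul_nonneg (mul_nonneg b0 hv0) (by linarith : (0:ℝ) ≤ f₄*(1-f₃)*(1-f₂) - 4/27),
      mul_lt_mul_of_pos_left g2 hppos]
  have h3 : f₂ * f₃ * ((1-f₂)*(1-f₃) - 4/27)^2 > (4/27)^2 * ((1-f₂)*(1-f₃)) := by
    have hmul := mul_lt_mul'' h1 h2 (by positivity) (by positivity)
    have h4 : f₂ * f₃ * ((1-f₂)*(1-f₃) - 4/27)^2 * ((1-f₂)*(1-f₃))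
        > (4/27)^2 * ((1-f₂)*(1-f₃)) * ((1-f₂)*(1-f₃)) := by nlinarith
    exact lt_of_mul_lt_mul_right (by nlinarith) (le_of_lt hppos)
  exact core f₂ f₃ b0 b1 c0 c1 hpt h3

/-- The maximal symmetric rate in the capacity region of the four-node two-way tandem
collision network is `4/27`: for all duty factors `f₁,…,f₄ ∈ [0,1]`, the minimum of the
six throughput constraints is at most `4/27`, and at `f₁ = f₂ = f₃ = f₄ = 1/3` it equals
`4/27`. -/
theorem max_symmetric_rate_two_way_tandem :
    (∀ f₁ f₂ f₃ f₄ : ℝ,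
      f₁ ∈ Set.Icc (0 : ℝ) 1 → f₂ ∈ Set.Icc (0 : ℝ) 1 →
      f₃ ∈ Set.Icc (0 : ℝ) 1 → f₄ ∈ Set.Icc (0 : ℝ) 1 →
        min (f₁ * (1 - f₂) * (1 - f₃))
          (min (f₂ * (1 - f₃) * (1 - f₄))
            (min (f₃ * (1 - f₄))
              (min (f₄ * (1 - f₃) * (1 - f₂))
                (min (f₃ * (1 - f₂) * (1 - f₁)) (f₂ * (1 - f₁))))))
          ≤ 4 / 27) ∧
    (min ((1/3 : ℝ) * (1 - 1/3) * (1 - 1/3))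
        (min ((1/3 : ℝ) * (1 - 1/3) * (1 - 1/3))
          (min ((1/3 : ℝ) * (1 - 1/3))
            (min ((1/3 : ℝ) * (1 - 1/3) * (1 - 1/3))
              (min ((1/3 : ℝ) * (1 - 1/3) * (1 - 1/3)) ((1/3 : ℝ) * (1 - 1/3))))))
      = 4 / 27) := by
  constructor
  · intro f₁ f₂ f₃ f₄ h1 h2 h3 h4
    by_contra hc
    push_neg at hc
    simp only [lt_min_iff] at hc
    exact aux f₁ f₂ f₃ f₄ h1.1 h1.2 h2.1 h2.2 h3.1 h3.2 h4.1 h4.2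
      hc.1 hc.2.1 hc.2.2.2.1 hc.2.2.2.2.1
  · norm_num
end
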